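/- arXiv:1910.06623 — 8 statements merged into one kernel-verified Lean document; each statement's English description precedes it below -/
import Mathlib

section
/- If s > 0 and s ∉ [t − √t, t + √t], then there exists x_+ > 0 such that F_s(x) > 0 for all x ≥ x_+; in particular, F_s has a zero on (0,∞). -/
open Real Filter Topology

/-- The digamma function `ψ(x) = d/dx log Γ(x)`. -/
noncomputable def digamma (x : ℝ) : ℝ := deriv (fun y => Real.log (Real.Gamma y)) x

/-- `φ(x) := ψ(x) - log x`. -/
noncomputable def phiFn (x : ℝ) : ℝ := digamma x - Real.log x

/-- `F_s(x) := φ(x) − φ(x+t) + (x+t)/(x+s) − log((x+t)/(x+s)) − 1`. -/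
noncomputable def Fs (t s x : ℝ) : ℝ :=
  phiFn x - phiFn (x + t) + (x + t) / (x + s) - Real.log ((x + t) / (x + s)) - 1

namespace FsProof

lemma gamma_ne_neg (x : ℝ) (hx : 0 < x) : ∀ m : ℕ, x ≠ -m := by
  intro m h
  have : (0:ℝ) ≤ m := Nat.cast_nonneg m
  linarith [h ▸ hx]

lemma hasDerivAt_realGamma (x : ℝ) (hx : 0 < x) :
    HasDerivAt Real.Gamma ((deriv Complex.Gamma x).re) x := by
  have hc : DifferentiableAt ℂ Complex.Gamma (x : ℂ) := by
    refine Complex.differentiableAt_Gamma _ (fun m => ?_)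
    intro h
    have := gamma_ne_neg x hx m
    apply this
    have : ((x : ℂ)).re = ((-(m:ℂ))).re := by rw [h]
    simpa using this
  have h1 : HasDerivAt Complex.Gamma (deriv Complex.Gamma (x:ℂ)) (x:ℂ) := hc.hasDerivAt
  have h2 := h1.real_of_complex
  have h3 : (fun x : ℝ => (Complex.Gamma (x:ℂ)).re) = Real.Gamma := by
    funext y; rw [Complex.Gamma_ofReal]; simp
  rwa [h3] at h2

lemma hasDerivAt_logGamma (x : ℝ) (hx : 0 < x) :
    HasDerivAt (fun y => Real.log (Real.Gamma y)) (digamma x) x := by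
  have hpos := Real.Gamma_pos_of_pos hx
  have h := (hasDerivAt_realGamma x hx).log hpos.ne'
  have hd : digamma x = (deriv Complex.Gamma x).re / Real.Gamma x := h.deriv
  rwa [hd]

lemma digamma_eq (x : ℝ) (hx : 0 < x) :
    digamma x = (deriv Complex.Gamma x).re / Real.Gamma x :=
  ((hasDerivAt_realGamma x hx).log (Real.Gamma_pos_of_pos hx).ne').deriv

lemma digamma_add_one (x : ℝ) (hx : 0 < x) :
    digamma (x + 1) = digamma x + 1 / x := by
  have hx1 : (0:ℝ) < x + 1 := by linarith
  have h1 : HasDerivAt (fun y : ℝ => Real.log (Real.Gamma (y + 1))) (digamma (x+1)) x := by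
    have hshift : HasDerivAt (fun y : ℝ => y + 1) 1 x := (hasDerivAt_id x).add_const 1
    have := (hasDerivAt_logGamma (x+1) hx1).comp x hshift
    rw [mul_one] at this; exact this
  have h2 : (fun y : ℝ => Real.log (Real.Gamma (y + 1)))
      =ᶠ[𝓝 x] fun y => Real.log y + Real.log (Real.Gamma y) := by
    filter_upwards [IsOpen.mem_nhds isOpen_Ioi hx] with y hy
    have hy' : (0:ℝ) < y := hy
    rw [Real.Gamma_add_one hy'.ne', Real.log_mul hy'.ne' (Real.Gamma_pos_of_pos hy').ne']
  have h3 : HasDerivAt (fun y : ℝ => Real.log y + Real.log (Real.Gamma y))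
      (1/x + digamma x) x := by
    have := (Real.hasDerivAt_log hx.ne').add (hasDerivAt_logGamma x hx)
    rw [one_div]; exact this
  have h4 : HasDerivAt (fun y : ℝ => Real.log y + Real.log (Real.Gamma y)) (digamma (x+1)) x :=
    h1.congr_of_eventuallyEq h2.symm
  have := h4.unique h3
  linarith

lemma digamma_le_log (x : ℝ) (hx : 0 < x) : digamma x ≤ Real.log x := by
  have hx1 : x < x + 1 := by linarith
  have h := Real.convexOn_log_Gamma.le_slope_of_hasDerivAt (Set.mem_Ioi.2 hx)
    (Set.mem_Ioi.2 (by linarith : (0:ℝ) < x + 1)) hx1 (hasDerivAt_logGamma x hx)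
  rw [slope_def_field] at h
  have hval : (Real.log ∘ Real.Gamma) (x+1) - (Real.log ∘ Real.Gamma) x = Real.log x := by
    simp only [Function.comp]
    rw [Real.Gamma_add_one hx.ne', Real.log_mul hx.ne' (Real.Gamma_pos_of_pos hx).ne']
    ring
  rw [hval] at h
  simpa using h

lemma log_le_digamma_add_one (x : ℝ) (hx : 0 < x) : Real.log x ≤ digamma x + 1 / x := by
  have hx1 : x < x + 1 := by linarith
  have h := Real.convexOn_log_Gamma.slope_le_of_hasDerivAt (Set.mem_Ioi.2 hx)
    (Set.mem_Ioi.2 (by linarith : (0:ℝ) < x + 1)) hx1 (hasDerivAt_logGamma (x+1) (by linarith))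
  rw [slope_def_field] at h
  have hval : (Real.log ∘ Real.Gamma) (x+1) - (Real.log ∘ Real.Gamma) x = Real.log x := by
    simp only [Function.comp]
    rw [Real.Gamma_add_one hx.ne', Real.log_mul hx.ne' (Real.Gamma_pos_of_pos hx).ne']
    ring
  rw [hval] at h
  have h2 : Real.log x ≤ digamma (x+1) := by simpa using h
  rw [digamma_add_one x hx] at h2
  exact h2

lemma phiFn_nonpos (x : ℝ) (hx : 0 < x) : phiFn x ≤ 0 := by
  have := digamma_le_log x hx
  simp only [phiFn]; linarith

lemma neg_inv_le_phiFn (x : ℝ) (hx : 0 < x) : -(1/x) ≤ phiFn x := by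
  have := log_le_digamma_add_one x hx
  simp only [phiFn]; linarith



/-- `log(1+u) ≤ u - u²/2 + u³/3` for `u > -1`. -/
lemma log_le_cubic {u : ℝ} (hu : -1 < u) :
    Real.log (1 + u) ≤ u - u^2/2 + u^3/3 := by
  set f : ℝ → ℝ := fun v => v - v^2/2 + v^3/3 - Real.log (1+v) with hf
  have hderiv : ∀ v : ℝ, -1 < v → HasDerivAt f (v^3/(1+v)) v := by
    intro v hv
    have h1v : (0:ℝ) < 1 + v := by linarith
    have h : HasDerivAt (fun w : ℝ => w - w^2/2 + w^3/3 - Real.log (1+w))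
        (1 - (2*v)/2 + (3*v^2)/3 - 1/(1+v)) v := by
      have hid := hasDerivAt_id v
      have hsq : HasDerivAt (fun w : ℝ => w^2) (2*v) v := by
        simpa using (hasDerivAt_pow 2 v)
      have hcb : HasDerivAt (fun w : ℝ => w^3) (3*v^2) v := by
        simpa using (hasDerivAt_pow 3 v)
      have hlog : HasDerivAt (fun w : ℝ => Real.log (1+w)) (1/(1+v)) v := by
        have h1 : HasDerivAt (fun w : ℝ => 1 + w) 1 v := by
          simpa using (hasDerivAt_id v).const_add 1
        simpa using h1.log h1v.ne'
      exact ((hid.sub (hsq.div_const 2)).add (hcb.div_const 3)).sub hlog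
    convert h using 1
    field_simp
    ring
  have hcont : ∀ v : ℝ, -1 < v → ContinuousAt f v := fun v hv => (hderiv v hv).continuousAt
  have hf0 : f 0 = 0 := by simp [hf]
  rcases le_or_gt 0 u with h0 | h0
  · -- monotone on [0, u]
    have hmono : MonotoneOn f (Set.Ici (0:ℝ)) := by
      apply monotoneOn_of_deriv_nonneg (convex_Ici 0)
      · exact continuousOn_of_forall_continuousAt (fun v hv => hcont v (by simp at hv; linarith))
      · intro v hv
        rw [interior_Ici] at hv
        exact (hderiv v (by simp at hv; linarith)).differentiableAt.differentiableWithinAt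
      · intro v hv
        rw [interior_Ici] at hv
        have hv' : (0:ℝ) < v := hv
        rw [(hderiv v (by linarith)).deriv]
        positivity
    have := hmono (Set.mem_Ici.2 le_rfl) (Set.mem_Ici.2 h0) h0
    rw [hf0] at this
    simp only [hf] at this
    linarith
  · -- antitone on (-1, 0]
    have hanti : AntitoneOn f (Set.Ioc (-1:ℝ) 0) := by
      apply antitoneOn_of_deriv_nonpos (convex_Ioc (-1) 0)
      · exact continuousOn_of_forall_continuousAt (fun v hv => hcont v hv.1)
      · intro v hv
        rw [interior_Ioc] at hv
        exact (hderiv v hv.1).differentiableAt.differentiableWithinAt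
      · intro v hv
        rw [interior_Ioc] at hv
        rw [(hderiv v hv.1).deriv]
        have h1 : (0:ℝ) < 1 + v := by linarith [hv.1]
        have h2 : v^3 ≤ 0 := by nlinarith [sq_nonneg v, hv.2.le]
        exact div_nonpos_of_nonpos_of_nonneg h2 h1.le
    have := hanti (Set.mem_Ioc.2 ⟨hu, h0.le⟩) (Set.mem_Ioc.2 ⟨by norm_num, le_rfl⟩) h0.le
    rw [hf0] at this
    simp only [hf] at this
    linarith

/-- `u - u²/2 ≤ log(1+u)` for `u ≥ 0`. -/
lemma quad_le_log {u : ℝ} (hu : 0 ≤ u) :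
    u - u^2/2 ≤ Real.log (1 + u) := by
  set f : ℝ → ℝ := fun v => Real.log (1+v) - v + v^2/2 with hf
  have hderiv : ∀ v : ℝ, 0 ≤ v → HasDerivAt f (v^2/(1+v)) v := by
    intro v hv
    have h1v : (0:ℝ) < 1 + v := by linarith
    have hlog : HasDerivAt (fun w : ℝ => Real.log (1+w)) (1/(1+v)) v := by
      have h1 : HasDerivAt (fun w : ℝ => 1 + w) 1 v := by
        simpa using (hasDerivAt_id v).const_add 1
      simpa using h1.log h1v.ne'
    have hsq : HasDerivAt (fun w : ℝ => w^2) (2*v) v := by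
      simpa using (hasDerivAt_pow 2 v)
    have h := (hlog.sub (hasDerivAt_id v)).add (hsq.div_const 2)
    refine h.congr_deriv ?_
    field_simp
    ring
  have hmono : MonotoneOn f (Set.Ici (0:ℝ)) := by
    apply monotoneOn_of_deriv_nonneg (convex_Ici 0)
    · exact continuousOn_of_forall_continuousAt
        (fun v hv => (hderiv v (by simp at hv; linarith)).continuousAt)
    · intro v hv
      rw [interior_Ici] at hv
      exact (hderiv v (le_of_lt hv)).differentiableAt.differentiableWithinAt
    · intro v hv
      rw [interior_Ici] at hv
      rw [(hderiv v (le_of_lt hv)).deriv]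
      have : (0:ℝ) < v := hv
      positivity
  have hf0 : f 0 = 0 := by simp [hf]
  have := hmono (Set.mem_Ici.2 le_rfl) (Set.mem_Ici.2 hu) hu
  rw [hf0] at this
  simp only [hf] at this
  linarith

/-- `g(y) = log(y+1) - log y - 1/y`. -/
noncomputable def gFn (y : ℝ) : ℝ := Real.log (y+1) - Real.log y - 1/y

/-- `a(y) = 1/y + 1/(2y²)`. -/
noncomputable def aFn (y : ℝ) : ℝ := 1/y + 1/(2*y^2)

/-- `r(y) = g(y) + 1/(2y²)`. -/
noncomputable def rFn (y : ℝ) : ℝ := gFn y + 1/(2*y^2)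

lemma gFn_ge (y : ℝ) (hy : 0 < y) : -(1/(2*y^2)) ≤ gFn y := by
  have h := quad_le_log (u := 1/y) (by positivity)
  have hlog : Real.log (1 + 1/y) = Real.log (y+1) - Real.log y := by
    rw [show (1 : ℝ) + 1/y = (y+1)/y by field_simp]
    rw [Real.log_div (by linarith) hy.ne']
  rw [hlog] at h
  have : (1:ℝ)/y - (1/y)^2/2 = 1/y - 1/(2*y^2) := by field_simp
  rw [this] at h
  simp only [gFn]
  linarith

lemma gFn_nonpos (y : ℝ) (hy : 0 < y) : gFn y ≤ 0 := by
  have h1 : (0:ℝ) < 1 + 1/y := by positivity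
  have h := Real.log_le_sub_one_of_pos h1
  have hlog : Real.log (1 + 1/y) = Real.log (y+1) - Real.log y := by
    rw [show (1 : ℝ) + 1/y = (y+1)/y by field_simp]
    rw [Real.log_div (by linarith) hy.ne']
  rw [hlog] at h
  simp only [gFn]
  linarith

lemma rFn_antitoneOn : AntitoneOn rFn (Set.Ioi (0:ℝ)) := by
  have hderiv : ∀ v : ℝ, 0 < v → HasDerivAt rFn (-(1/(v^3*(v+1)))) v := by
    intro v hv
    have h1 : HasDerivAt (fun w : ℝ => Real.log (w+1)) (1/(v+1)) v := by
      have := ((hasDerivAt_id v).add_const 1).log (by linarith : v + 1 ≠ 0)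
      simpa using this
    have h2 : HasDerivAt (fun w : ℝ => Real.log w) (1/v) v := by
      simpa [one_div] using Real.hasDerivAt_log hv.ne'
    have h3 : HasDerivAt (fun w : ℝ => 1/w) (-(1/v^2)) v := by
      have := (hasDerivAt_inv hv.ne')
      simpa [one_div] using this
    have h4 : HasDerivAt (fun w : ℝ => 1/(2*w^2)) (-(1/v^3)) v := by
      have hw : HasDerivAt (fun w : ℝ => w^2) (2*v) v := by
        simpa using hasDerivAt_pow 2 v
      have hw2 : HasDerivAt (fun w : ℝ => 2*w^2) (2*(2*v)) v := hw.const_mul 2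
      have := hw2.inv (by positivity : 2*v^2 ≠ 0)
      have heq : (fun w : ℝ => 1/(2*w^2)) = fun w => (2*w^2)⁻¹ := by
        funext w; rw [one_div]
      rw [heq]
      refine this.congr_deriv ?_
      field_simp
    have h := ((h1.sub h2).sub h3).add h4
    have heq : rFn = fun w => Real.log (w+1) - Real.log w - 1/w + 1/(2*w^2) := by
      funext w; simp [rFn, gFn]
    rw [heq]
    refine h.congr_deriv ?_
    field_simp
    ring
  apply antitoneOn_of_deriv_nonpos (convex_Ioi 0)
  · exact continuousOn_of_forall_continuousAt (fun v hv => (hderiv v hv).continuousAt)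
  · intro v hv
    rw [interior_Ioi] at hv
    exact (hderiv v hv).differentiableAt.differentiableWithinAt
  · intro v hv
    rw [interior_Ioi] at hv
    rw [(hderiv v hv).deriv]
    have : (0:ℝ) < v := hv
    have : (0:ℝ) < 1/(v^3*(v+1)) := by positivity
    linarith

lemma aFn_antitone {y z : ℝ} (hy : 0 < y) (hyz : y ≤ z) : aFn z ≤ aFn y := by
  have hz : 0 < z := lt_of_lt_of_le hy hyz
  simp only [aFn]
  gcongr

lemma inv_sq_identity (y : ℝ) (hy : 0 < y) :
    1/y^2 = (aFn y - aFn (y+1)) + 1/(2*y^2*(y+1)^2) := by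
  simp only [aFn]
  have h1 : y + 1 ≠ 0 := by linarith
  field_simp
  ring


lemma phi_telescope (x : ℝ) (hx : 0 < x) (N : ℕ) :
    phiFn x - phiFn (x + N) = ∑ n ∈ Finset.range N, gFn (x + n) := by
  induction N with
  | zero => simp
  | succ N ih =>
    have hxN : 0 < x + (N:ℝ) := by positivity
    have hstep : phiFn (x + N) - phiFn (x + N + 1) = gFn (x + N) := by
      simp only [phiFn, gFn]
      rw [digamma_add_one (x + N) hxN]
      ring
    have harg : x + ((N+1 : ℕ) : ℝ) = x + (N:ℝ) + 1 := by push_cast; ring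
    rw [Finset.sum_range_succ, ← ih, harg]
    linarith

lemma sum_inv_sq_le (x : ℝ) (hx : 0 < x) (N : ℕ) :
    ∑ n ∈ Finset.range N, 1/(x+n)^2 ≤ aFn x - aFn (x+N) + 1/(2*x^3) := by
  have key : ∀ n : ℕ, 1/(x+(n:ℝ))^2 ≤ (aFn (x+n) - aFn (x+((n+1:ℕ):ℝ)))
      + (1/(2*x^2)) * (1/(x+n) - 1/(x+((n+1:ℕ):ℝ))) := by
    intro n
    have hxn : (0:ℝ) < x + n := by positivity
    have hid := inv_sq_identity (x+n) hxn
    have hcast : (x + ((n+1:ℕ):ℝ)) = (x+n)+1 := by push_cast; ring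
    rw [hcast]
    have he : 1/(2*(x+(n:ℝ))^2*((x+n)+1)^2) ≤ (1/(2*x^2)) * (1/(x+n) - 1/((x+n)+1)) := by
      set y := x + (n:ℝ) with hy
      have hy0 : 0 < y := hxn
      have h1 : 1/y - 1/(y+1) = 1/(y*(y+1)) := by field_simp; ring
      rw [h1, div_mul_div_comm, one_mul]
      apply one_div_le_one_div_of_le (by positivity)
      have hxy : x ≤ y := by rw [hy]; linarith [(Nat.cast_nonneg n : (0:ℝ) ≤ n)]
      have hx2 : x^2 ≤ y^2 := by nlinarith
      have h5 : y*(y+1) ≤ (y+1)^2 := by nlinarith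
      have h6 := mul_le_mul hx2 h5 (by positivity) (sq_nonneg y)
      linarith
    linarith
  calc ∑ n ∈ Finset.range N, 1/(x+(n:ℝ))^2
      ≤ ∑ n ∈ Finset.range N, ((aFn (x+n) - aFn (x+((n+1:ℕ):ℝ)))
          + (1/(2*x^2)) * (1/(x+n) - 1/(x+((n+1:ℕ):ℝ)))) :=
        Finset.sum_le_sum (fun n _ => key n)
    _ = (aFn x - aFn (x+N)) + (1/(2*x^2)) * (1/x - 1/(x+N)) := by
        rw [Finset.sum_add_distrib, ← Finset.mul_sum]
        rw [Finset.sum_range_sub' (fun n : ℕ => aFn (x+(n:ℝ))) N,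
          Finset.sum_range_sub' (fun n : ℕ => 1/(x+(n:ℝ))) N]
        norm_num
    _ ≤ aFn x - aFn (x+N) + 1/(2*x^3) := by
        have h2 : (1/(2*x^2)) * (1/x - 1/(x+(N:ℝ))) ≤ 1/(2*x^3) := by
          have hXN : (0:ℝ) < x + N := by positivity
          have h3 : (1/(2*x^2)) * (1/x) = 1/(2*x^3) := by field_simp
          have h5 : (0:ℝ) ≤ (1/(2*x^2)) * (1/(x+(N:ℝ))) := by positivity
          have h6 : (1/(2*x^2)) * (1/x - 1/(x+(N:ℝ)))
              = 1/(2*x^3) - (1/(2*x^2))*(1/(x+(N:ℝ))) := by rw [mul_sub, h3]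
          linarith
        linarith

lemma le_sum_inv_sq (x : ℝ) (hx : 0 < x) (N : ℕ) :
    aFn x - aFn (x+N) ≤ ∑ n ∈ Finset.range N, 1/(x+n)^2 := by
  have key : ∀ n : ℕ, (aFn (x+(n:ℝ)) - aFn (x+((n+1:ℕ):ℝ))) ≤ 1/(x+(n:ℝ))^2 := by
    intro n
    have hxn : (0:ℝ) < x + n := by positivity
    have hid := inv_sq_identity (x+n) hxn
    have hcast : (x + ((n+1:ℕ):ℝ)) = (x+n)+1 := by push_cast; ring
    rw [hcast]
    have hpos : (0:ℝ) ≤ 1/(2*(x+(n:ℝ))^2*((x+n)+1)^2) := by positivity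
    linarith
  calc aFn x - aFn (x+N) = ∑ n ∈ Finset.range N, (aFn (x+(n:ℝ)) - aFn (x+((n+1:ℕ):ℝ))) := by
        rw [Finset.sum_range_sub' (fun n : ℕ => aFn (x+(n:ℝ))) N]; norm_num
    _ ≤ ∑ n ∈ Finset.range N, 1/(x+(n:ℝ))^2 := Finset.sum_le_sum (fun n _ => key n)

lemma phi_diff_lb (x t : ℝ) (hx : 0 < x) (ht : 0 ≤ t) :
    -(1/2)*(aFn x - aFn (x+t)) - 1/(4*x^3) ≤ phiFn x - phiFn (x+t) := by
  have hxt : 0 < x + t := by linarith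
  have key : ∀ N : ℕ,
      -(1/2)*(aFn x - aFn (x+t)) - 1/(4*x^3) - 1/(x+(N:ℝ)) ≤ phiFn x - phiFn (x+t) := by
    intro N
    have h1 := phi_telescope x hx N
    have h2 := phi_telescope (x+t) hxt N
    have hsplit : phiFn x - phiFn (x+t)
        = (∑ n ∈ Finset.range N, (gFn (x+n) - gFn (x+t+n)))
          + (phiFn (x+(N:ℝ)) - phiFn (x+t+(N:ℝ))) := by
      rw [Finset.sum_sub_distrib, ← h1, ← h2]
      ring
    have hterm : ∀ n : ℕ, -(1/2) * (1/(x+(n:ℝ))^2 - 1/(x+t+(n:ℝ))^2)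
        ≤ gFn (x+n) - gFn (x+t+n) := by
      intro n
      have hxn : (0:ℝ) < x + n := by positivity
      have hxtn : (0:ℝ) < x + t + n := by linarith
      have hr := rFn_antitoneOn (Set.mem_Ioi.2 hxn) (Set.mem_Ioi.2 hxtn) (by linarith)
      simp only [rFn] at hr
      have e1 : (1/2)*(1/(x+(n:ℝ))^2) = 1/(2*(x+(n:ℝ))^2) := one_div_mul_one_div _ _
      have e2 : (1/2)*(1/(x+t+(n:ℝ))^2) = 1/(2*(x+t+(n:ℝ))^2) := one_div_mul_one_div _ _
      rw [← e1, ← e2] at hr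
      linarith
    have hsum1 : ∑ n ∈ Finset.range N, (gFn (x+n) - gFn (x+t+n))
        ≥ -(1/2) * ((∑ n ∈ Finset.range N, 1/(x+(n:ℝ))^2)
            - (∑ n ∈ Finset.range N, 1/(x+t+(n:ℝ))^2)) := by
      have := Finset.sum_le_sum (fun n (_ : n ∈ Finset.range N) => hterm n)
      calc -(1/2) * ((∑ n ∈ Finset.range N, 1/(x+(n:ℝ))^2)
            - (∑ n ∈ Finset.range N, 1/(x+t+(n:ℝ))^2))
          = ∑ n ∈ Finset.range N, (-(1/2) * (1/(x+(n:ℝ))^2 - 1/(x+t+(n:ℝ))^2)) := by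
            rw [← Finset.sum_sub_distrib, ← Finset.mul_sum]
        _ ≤ _ := this
    have hub := sum_inv_sq_le x hx N
    have hlb := le_sum_inv_sq (x+t) hxt N
    have haN : aFn (x+t+(N:ℝ)) ≤ aFn (x+(N:ℝ)) := by
      apply aFn_antitone (by positivity) (by linarith)
    have hphiN : -(1/(x+(N:ℝ))) ≤ phiFn (x+(N:ℝ)) := by
      have := neg_inv_le_phiFn (x+(N:ℝ)) (by positivity)
      simpa using this
    have hphiN2 : phiFn (x+t+(N:ℝ)) ≤ 0 := phiFn_nonpos _ (by positivity)
    rw [hsplit]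
    have e1 : (x+t)+(N:ℝ) = x+t+(N:ℝ) := by ring
    rw [e1] at hlb
    have e2 : 1/(4*x^3) = (1/2)*(1/(2*x^3)) := by
      rw [one_div_mul_one_div]; ring_nf
    linarith [hsum1, hub, hlb, haN, hphiN, hphiN2, e2]
  have hlim : Tendsto (fun N : ℕ =>
      -(1/2)*(aFn x - aFn (x+t)) - 1/(4*x^3) - 1/(x+(N:ℝ))) atTop
      (𝓝 (-(1/2)*(aFn x - aFn (x+t)) - 1/(4*x^3) - 0)) := by
    apply Tendsto.sub tendsto_const_nhds
    apply Tendsto.div_atTop tendsto_const_nhds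
    exact tendsto_atTop_add_const_left _ _ tendsto_natCast_atTop_atTop
  rw [sub_zero] at hlim
  exact le_of_tendsto' hlim key

lemma phi_step (x : ℝ) (hx : 0 < x) : phiFn x - phiFn (x+1) = gFn x := by
  simp only [phiFn, gFn]
  rw [digamma_add_one x hx]
  ring

lemma continuousOn_digamma : ContinuousOn digamma (Set.Ioi (0:ℝ)) := by
  have hopen : IsOpen {z : ℂ | 0 < z.re} := isOpen_lt continuous_const Complex.continuous_re
  have hdiff : DifferentiableOn ℂ Complex.Gamma {z : ℂ | 0 < z.re} := by
    intro z hz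
    refine (Complex.differentiableAt_Gamma z (fun m => ?_)).differentiableWithinAt
    intro h
    have h2 : z.re = -(m:ℝ) := by rw [h]; simp
    have h3 : (0:ℝ) < z.re := hz
    have h4 : (0:ℝ) ≤ m := Nat.cast_nonneg m
    linarith [h2 ▸ h3]
  have hA := (hdiff.analyticOnNhd hopen).deriv
  have hcontd : ContinuousOn (deriv Complex.Gamma) {z : ℂ | 0 < z.re} :=
    fun z hz => (hA z hz).continuousAt.continuousWithinAt
  have hc1 : ContinuousOn (fun x : ℝ => (deriv Complex.Gamma (x:ℂ)).re) (Set.Ioi 0) := by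
    apply Complex.continuous_re.comp_continuousOn
    apply hcontd.comp Complex.continuous_ofReal.continuousOn
    intro x hx
    simpa using (hx : (0:ℝ) < x)
  have hc2 : ContinuousOn Real.Gamma (Set.Ioi (0:ℝ)) := fun x hx =>
    (Real.differentiableAt_Gamma (gamma_ne_neg x hx)).continuousAt.continuousWithinAt
  have h := hc1.div hc2 (fun x hx => (Real.Gamma_pos_of_pos hx).ne')
  exact h.congr (fun x hx => digamma_eq x hx)

lemma continuousOn_phiFn : ContinuousOn phiFn (Set.Ioi (0:ℝ)) := by
  apply continuousOn_digamma.sub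
  exact Real.continuousOn_log.mono (fun x hx => by
    simp only [Set.mem_compl_iff, Set.mem_singleton_iff]
    exact ne_of_gt hx)

lemma continuousOn_Fs (t s : ℝ) (ht : 0 < t) (hs : 0 < s) :
    ContinuousOn (Fs t s) (Set.Ioi (0:ℝ)) := by
  have h1 : ContinuousOn (fun x => phiFn (x+t)) (Set.Ioi (0:ℝ)) := by
    apply continuousOn_phiFn.comp (Continuous.continuousOn (by fun_prop))
    intro x hx
    have hx' : (0:ℝ) < x := hx
    simp only [Set.mem_Ioi]
    linarith
  have hq : ContinuousOn (fun x : ℝ => (x+t)/(x+s)) (Set.Ioi 0) := by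
    apply ContinuousOn.div (Continuous.continuousOn (by fun_prop))
      (Continuous.continuousOn (by fun_prop))
    intro x hx
    have : (0:ℝ) < x := hx
    positivity
  have hlog : ContinuousOn (fun x : ℝ => Real.log ((x+t)/(x+s))) (Set.Ioi 0) := by
    apply ContinuousOn.log hq
    intro x hx
    have : (0:ℝ) < x := hx
    positivity
  have : Fs t s = fun x => phiFn x - phiFn (x + t) + (x + t) / (x + s)
      - Real.log ((x + t) / (x + s)) - 1 := by funext x; simp [Fs]
  rw [this]
  exact (((continuousOn_phiFn.sub h1).add hq).sub hlog).sub continuousOn_const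

lemma Fs_lb (t s x : ℝ) (ht : 0 < t) (hs : 0 < s) (hx : 0 < x) :
    -(1/2)*(aFn x - aFn (x+t)) - 1/(4*x^3)
      + ((t-s)/(x+s))^2/2 - ((t-s)/(x+s))^3/3 ≤ Fs t s x := by
  have hxs : 0 < x + s := by linarith
  have hxt : 0 < x + t := by linarith
  set u := (t-s)/(x+s) with hu
  have hv : 1 + u = (x+t)/(x+s) := by rw [hu]; field_simp; ring
  have hu1 : -1 < u := by
    have : (0:ℝ) < (x+t)/(x+s) := by positivity
    linarith [hv ▸ this]
  have hA := log_le_cubic hu1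
  have hG := phi_diff_lb x t hx ht.le
  simp only [Fs]
  rw [← hv]
  linarith

lemma tendsto_x_div_add (r : ℝ) : Tendsto (fun x : ℝ => x/(x+r)) atTop (𝓝 1) := by
  have h0 : Tendsto (fun x : ℝ => r/(x+r)) atTop (𝓝 0) :=
    Tendsto.div_atTop tendsto_const_nhds (tendsto_atTop_add_const_right _ r tendsto_id)
  have h1 : Tendsto (fun x : ℝ => 1 - r/(x+r)) atTop (𝓝 (1 - 0)) := tendsto_const_nhds.sub h0
  rw [sub_zero] at h1
  apply Tendsto.congr' _ h1
  filter_upwards [eventually_gt_atTop (|r|+1)] with x hx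
  have hxr : 0 < x + r := by cases abs_cases r <;> linarith
  field_simp
  ring

lemma Fs_eventually_pos (t s : ℝ) (ht : 0 < t) (hs : 0 < s) (hgap : t < (t-s)^2) :
    ∃ xp > (0:ℝ), ∀ x ≥ xp, 0 < Fs t s x := by
  set L := ((t-s)^2 - t)/2 with hL
  have hLpos : 0 < L := by rw [hL]; linarith
  have hexp : ∀ x : ℝ, 0 < x →
      x^2 * (-(1/2)*(aFn x - aFn (x+t)) - 1/(4*x^3)
        + ((t-s)/(x+s))^2/2 - ((t-s)/(x+s))^3/3)
      = -(1/2)*(t*(x/(x+t)) + (1/2)*(1 - (x/(x+t))^2)) - (1/4)*(1/x)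
        + ((t-s)^2/2)*(x/(x+s))^2 - ((t-s)^3/3)*((x/(x+s))^2*(1/(x+s))) := by
    intro x hx
    have hxt : 0 < x + t := by linarith
    have hxs : 0 < x + s := by linarith
    have e1 : x ≠ 0 := hx.ne'
    have e2 : x + t ≠ 0 := hxt.ne'
    have e3 : x + s ≠ 0 := hxs.ne'
    simp only [aFn]
    field_simp
    ring
  have T1 : Tendsto (fun x:ℝ => x/(x+t)) atTop (𝓝 1) := tendsto_x_div_add t
  have T2 : Tendsto (fun x:ℝ => x/(x+s)) atTop (𝓝 1) := tendsto_x_div_add s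
  have I1 : Tendsto (fun x:ℝ => 1/x) atTop (𝓝 0) :=
    Tendsto.div_atTop tendsto_const_nhds tendsto_id
  have I2 : Tendsto (fun x:ℝ => 1/(x+s)) atTop (𝓝 0) :=
    Tendsto.div_atTop tendsto_const_nhds (tendsto_atTop_add_const_right _ s tendsto_id)
  have hlim0 : Tendsto (fun x : ℝ =>
      -(1/2)*(t*(x/(x+t)) + (1/2)*(1 - (x/(x+t))^2)) - (1/4)*(1/x)
        + ((t-s)^2/2)*(x/(x+s))^2 - ((t-s)^3/3)*((x/(x+s))^2*(1/(x+s)))) atTop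
      (𝓝 (-(1/2)*(t*1 + (1/2)*(1 - 1^2)) - (1/4)*0
        + ((t-s)^2/2)*1^2 - ((t-s)^3/3)*(1^2*0))) := by
    have X1 : Tendsto (fun x:ℝ => -(1/2)*(t*(x/(x+t)) + (1/2)*(1 - (x/(x+t))^2)))
        atTop (𝓝 (-(1/2)*(t*1 + (1/2)*(1 - 1^2)))) :=
      tendsto_const_nhds.mul ((tendsto_const_nhds.mul T1).add
        (tendsto_const_nhds.mul (tendsto_const_nhds.sub (T1.pow 2))))
    have X2 : Tendsto (fun x:ℝ => (1/4)*(1/x)) atTop (𝓝 ((1/4)*0)) :=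
      tendsto_const_nhds.mul I1
    have X3 : Tendsto (fun x:ℝ => ((t-s)^2/2)*(x/(x+s))^2) atTop (𝓝 (((t-s)^2/2)*1^2)) :=
      tendsto_const_nhds.mul (T2.pow 2)
    have X4 : Tendsto (fun x:ℝ => ((t-s)^3/3)*((x/(x+s))^2*(1/(x+s))))
        atTop (𝓝 (((t-s)^3/3)*(1^2*0))) :=
      tendsto_const_nhds.mul ((T2.pow 2).mul I2)
    exact ((X1.sub X2).add X3).sub X4
  have hLeq : (-(1/2)*(t*1 + (1/2)*(1 - 1^2)) - (1/4)*0
      + ((t-s)^2/2)*1^2 - ((t-s)^3/3)*(1^2*0) : ℝ) = L := by rw [hL]; ring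
  rw [hLeq] at hlim0
  have h3 : Tendsto (fun x : ℝ => x^2 * (-(1/2)*(aFn x - aFn (x+t)) - 1/(4*x^3)
        + ((t-s)/(x+s))^2/2 - ((t-s)/(x+s))^3/3)) atTop (𝓝 L) := by
    apply Tendsto.congr' _ hlim0
    filter_upwards [eventually_gt_atTop 0] with x hx
    exact (hexp x hx).symm
  have h4 := h3.eventually (eventually_gt_nhds hLpos)
  obtain ⟨X, hX⟩ := Filter.eventually_atTop.1 (h4.and (eventually_gt_atTop 0))
  refine ⟨max X 1, lt_of_lt_of_le one_pos (le_max_right _ _), fun x hx => ?_⟩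
  obtain ⟨hx1, hx2⟩ := hX x (le_trans (le_max_left _ _) hx)
  have hLBpos : 0 < (-(1/2)*(aFn x - aFn (x+t)) - 1/(4*x^3)
      + ((t-s)/(x+s))^2/2 - ((t-s)/(x+s))^3/3) := by
    by_contra hcon
    push_neg at hcon
    nlinarith [sq_nonneg x]
  linarith [Fs_lb t s x ht hs hx2]

lemma Fs_neg_small (t s : ℝ) (ht : 0 < t) (hs : 0 < s) :
    ∃ x0 > (0:ℝ), Fs t s x0 < 0 := by
  set B := 2*Real.log 2 - 1 + 1/t + ((1+t)/s + (1+s)/t) with hB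
  set M := |B| + 1 with hM
  have hMpos : 0 < M := by positivity
  set x0 := min 1 (1/(2*M)) with hx0
  have hx0pos : 0 < x0 := lt_min one_pos (by positivity)
  refine ⟨x0, hx0pos, ?_⟩
  have hx01 : x0 ≤ 1 := min_le_left _ _
  have hx0M : x0 ≤ 1/(2*M) := min_le_right _ _
  have hxt : 0 < x0 + t := by linarith
  have hxs : 0 < x0 + s := by linarith
  -- φ(x0) ≤ g(x0)
  have hphi : phiFn x0 ≤ gFn x0 := by
    have h1 := phi_step x0 hx0pos
    have h2 := phiFn_nonpos (x0+1) (by linarith)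
    linarith
  -- g(x0) ≤ 2 log 2 - 1 - 1/(2 x0)
  have hg : gFn x0 ≤ 2*Real.log 2 - 1 - 1/(2*x0) := by
    have ha : Real.log (x0+1) ≤ Real.log 2 := by
      apply Real.log_le_log (by linarith)
      linarith
    have hb : -Real.log x0 ≤ Real.log 2 + 1/(2*x0) - 1 := by
      have h1 : (0:ℝ) < 1/(2*x0) := by positivity
      have h2 := Real.log_le_sub_one_of_pos h1
      rw [one_div, Real.log_inv, Real.log_mul two_ne_zero hx0pos.ne'] at h2
      have h3 : (2*x0)⁻¹ = 1/(2*x0) := (one_div _).symm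
      linarith
    have hc : 1/x0 = 1/(2*x0) + 1/(2*x0) := by field_simp; ring
    simp only [gFn]
    linarith
  -- -φ(x0+t) ≤ 1/t
  have hphit : -phiFn (x0+t) ≤ 1/t := by
    have h1 := neg_inv_le_phiFn (x0+t) hxt
    have h2 : 1/(x0+t) ≤ 1/t := one_div_le_one_div_of_le ht (by linarith)
    linarith
  -- A part
  have hApart : (x0+t)/(x0+s) - Real.log ((x0+t)/(x0+s)) - 1 ≤ (1+t)/s + (1+s)/t := by
    have hv : (0:ℝ) < (x0+t)/(x0+s) := by positivity
    have h1 : -Real.log ((x0+t)/(x0+s)) ≤ (x0+s)/(x0+t) - 1 := by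
      have h2 := Real.log_le_sub_one_of_pos (show (0:ℝ) < (x0+s)/(x0+t) by positivity)
      have h3 : Real.log ((x0+s)/(x0+t)) = -Real.log ((x0+t)/(x0+s)) := by
        rw [← Real.log_inv]
        congr 1
        rw [inv_div]
      linarith [h3 ▸ h2]
    have h4 : (x0+t)/(x0+s) ≤ (1+t)/s := by
      apply div_le_div₀ (by linarith) (by linarith) hs (by linarith)
    have h5 : (x0+s)/(x0+t) ≤ (1+s)/t := by
      apply div_le_div₀ (by linarith) (by linarith) ht (by linarith)
    linarith
  -- M ≤ 1/(2 x0)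
  have hMx : M ≤ 1/(2*x0) := by
    have h1 : 2*x0 ≤ 1/M := by
      have : 2*(1/(2*M)) = 1/M := by field_simp
      linarith
    rw [le_div_iff₀ (by positivity)]
    calc M * (2*x0) ≤ M * (1/M) := by
          apply mul_le_mul_of_nonneg_left h1 hMpos.le
      _ = 1 := by field_simp
  have hfinal : Fs t s x0 ≤ B - M := by
    simp only [Fs, hB]
    linarith
  have : B - M ≤ -1 := by
    have := le_abs_self B
    rw [hM]
    linarith
  linarith

end FsProof

open FsProof

/-- with `t = d/2`, `d ≥ 1` an integer, if `s > 0` and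
`s ∉ [t − √t, t + √t]`, then there exists `x₊ > 0` with `F_s(x) > 0` for all `x ≥ x₊`;
in particular `F_s` has a zero on `(0,∞)`. -/
theorem Fs_pos_eventually_and_has_zero (d : ℕ) (hd : 1 ≤ d) (t : ℝ) (ht : t = d / 2)
    (s : ℝ) (hs : 0 < s) (hs' : s ∉ Set.Icc (t - Real.sqrt t) (t + Real.sqrt t)) :
    (∃ xp > (0 : ℝ), ∀ x ≥ xp, 0 < Fs t s x) ∧ ∃ x > (0 : ℝ), Fs t s x = 0 := by
  have ht0 : 0 < t := by
    rw [ht]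
    have h1 : (1:ℝ) ≤ d := by exact_mod_cast hd
    linarith
  have hgap : t < (t-s)^2 := by
    have hsq : Real.sqrt t ^ 2 = t := Real.sq_sqrt ht0.le
    have hnn := Real.sqrt_nonneg t
    rw [Set.mem_Icc, not_and_or] at hs'
    rcases hs' with h | h
    · push_neg at h
      have h1 : Real.sqrt t < t - s := by linarith
      nlinarith
    · push_neg at h
      have h1 : Real.sqrt t < s - t := by linarith
      nlinarith
  obtain ⟨xp, hxp, hpos⟩ := Fs_eventually_pos t s ht0 hs hgap
  refine ⟨⟨xp, hxp, hpos⟩, ?_⟩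
  obtain ⟨x0, hx0, hneg⟩ := Fs_neg_small t s ht0 hs
  set b := max xp (x0+1) with hb
  have hx0b : x0 ≤ b := le_trans (by linarith) (le_max_right _ _)
  have hFb : 0 < Fs t s b := hpos b (le_max_left _ _)
  have hcont : ContinuousOn (Fs t s) (Set.Icc x0 b) :=
    (continuousOn_Fs t s ht0 hs).mono (fun y hy => lt_of_lt_of_le hx0 hy.1)
  have hiv := intermediate_value_Icc hx0b hcont
  have h0mem : (0:ℝ) ∈ Set.Icc (Fs t s x0) (Fs t s b) := ⟨hneg.le, hFb.le⟩
  obtain ⟨x, hxmem, hxval⟩ := hiv h0mem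
  exact ⟨x, lt_of_lt_of_le hx0 hxmem.1, hxval⟩
end

section
/- If δ_i > 0 and δ_i ∉ [d − √(2d), d + √(2d)] for all i ∈ {1,…,n}, then there exists x_+ > 0 such that F(x) > 0 for all x ≥ x_+; in particular, F has a zero on (0,∞). -/
open Real Matrix Filter Topology

lemma diffGamma {x : ℝ} (hx : 0 < x) : DifferentiableAt ℝ Real.Gamma x :=
  Real.differentiableAt_Gamma (fun m => by
    have h : (0:ℝ) ≤ (m:ℝ) := Nat.cast_nonneg m
    intro he
    rw [he] at hx
    linarith)

lemma diffLogGamma {x : ℝ} (hx : 0 < x) :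
    DifferentiableAt ℝ (fun y => Real.log (Real.Gamma y)) x :=
  (diffGamma hx).log (Real.Gamma_pos_of_pos hx).ne'

lemma hasDerivAt_digamma {x : ℝ} (hx : 0 < x) :
    HasDerivAt (fun y => Real.log (Real.Gamma y)) (digamma x) x :=
  (diffLogGamma hx).hasDerivAt

lemma digamma_add_one {x : ℝ} (hx : 0 < x) : digamma (x + 1) = digamma x + 1 / x := by
  have h1 : HasDerivAt (fun y => Real.log (Real.Gamma (y + 1))) (digamma (x + 1)) x := by
    have := (hasDerivAt_digamma (by linarith : (0:ℝ) < x + 1)).comp x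
      ((hasDerivAt_id x).add_const 1)
    simpa [Function.comp_def] using this
  have h2 : HasDerivAt (fun y => Real.log y + Real.log (Real.Gamma y))
      (1 / x + digamma x) x := by
    simpa [one_div, Pi.add_def] using (Real.hasDerivAt_log hx.ne').add (hasDerivAt_digamma hx)
  have heq : (fun y => Real.log (Real.Gamma (y + 1)))
      =ᶠ[nhds x] (fun y => Real.log y + Real.log (Real.Gamma y)) := by
    filter_upwards [eventually_gt_nhds hx] with y hy
    rw [Real.Gamma_add_one hy.ne', Real.log_mul hy.ne' (Real.Gamma_pos_of_pos hy).ne']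
  have := (h1.congr_of_eventuallyEq heq.symm).unique h2
  linarith

lemma digamma_le_log {x : ℝ} (hx : 0 < x) : digamma x ≤ Real.log x := by
  have h := Real.convexOn_log_Gamma.deriv_le_slope (Set.mem_Ioi.2 hx)
    (Set.mem_Ioi.2 (by linarith : (0:ℝ) < x + 1)) (by linarith) (diffLogGamma hx)
  have hs : slope (Real.log ∘ Real.Gamma) x (x + 1) = Real.log x := by
    rw [slope_def_field]
    simp only [Function.comp_apply]
    rw [Real.Gamma_add_one hx.ne', Real.log_mul hx.ne' (Real.Gamma_pos_of_pos hx).ne']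
    field_simp
    ring
  rw [hs] at h
  exact h

lemma log_le_digamma_add_one {x : ℝ} (hx : 0 < x) : Real.log x ≤ digamma (x + 1) := by
  have h := Real.convexOn_log_Gamma.slope_le_deriv (Set.mem_Ioi.2 hx)
    (Set.mem_Ioi.2 (by linarith : (0:ℝ) < x + 1)) (by linarith)
    (diffLogGamma (by linarith : (0:ℝ) < x + 1))
  have hs : slope (Real.log ∘ Real.Gamma) x (x + 1) = Real.log x := by
    rw [slope_def_field]
    simp only [Function.comp_apply]
    rw [Real.Gamma_add_one hx.ne', Real.log_mul hx.ne' (Real.Gamma_pos_of_pos hx).ne']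
    field_simp
    ring
  rw [hs] at h
  exact h

lemma log_sub_le_digamma {x : ℝ} (hx : 0 < x) : Real.log x - 1 / x ≤ digamma x := by
  have := log_le_digamma_add_one hx
  rw [digamma_add_one hx] at this
  linarith

lemma digamma_mono {x y : ℝ} (hx : 0 < x) (hxy : x ≤ y) : digamma x ≤ digamma y :=
  Real.convexOn_log_Gamma.monotoneOn_deriv
    (fun z hz => diffLogGamma (Set.mem_Ioi.1 hz))
    (Set.mem_Ioi.2 hx) (Set.mem_Ioi.2 (lt_of_lt_of_le hx hxy)) hxy

-- log(1+u) ≤ u - u²/2 + u³/3 for u ≥ 0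
lemma log_le_cubic {u : ℝ} (hu : 0 ≤ u) :
    Real.log (1 + u) ≤ u - u ^ 2 / 2 + u ^ 3 / 3 := by
  have key : ∀ v ∈ Set.Ici (0:ℝ), HasDerivAt
      (fun w => w - w ^ 2 / 2 + w ^ 3 / 3 - Real.log (1 + w))
      (1 - v + v ^ 2 - 1 / (1 + v)) v := by
    intro v hv
    have hv0 : (0:ℝ) ≤ v := hv
    have h1v : (0:ℝ) < 1 + v := by linarith
    have hlog : HasDerivAt (fun w : ℝ => Real.log (1 + w)) (1 / (1 + v)) v := by
      have := ((hasDerivAt_id v).const_add 1).log h1v.ne'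
      simpa using this
    have hpoly : HasDerivAt (fun w : ℝ => w - w ^ 2 / 2 + w ^ 3 / 3)
        (1 - v + v ^ 2) v := by
      have h1 := hasDerivAt_id v
      have h2 := ((hasDerivAt_pow 2 v).div_const 2)
      have h3 := ((hasDerivAt_pow 3 v).div_const 3)
      exact ((h1.sub h2).add h3).congr_deriv (by norm_num)
    exact hpoly.sub hlog
  have hmono : MonotoneOn (fun w : ℝ => w - w ^ 2 / 2 + w ^ 3 / 3 - Real.log (1 + w))
      (Set.Ici 0) := by
    apply monotoneOn_of_deriv_nonneg (convex_Ici 0)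
    · exact ContinuousOn.sub (by fun_prop) (ContinuousOn.log (by fun_prop)
        (fun v hv => by have : (0:ℝ) ≤ v := hv; intro h; linarith [h]))
    · intro v hv
      exact ((key v (interior_subset hv)).differentiableAt).differentiableWithinAt
    · intro v hv
      rw [interior_Ici] at hv
      have hv0 : (0:ℝ) < v := hv
      rw [(key v hv0.le).deriv]
      have h1v : (0:ℝ) < 1 + v := by linarith
      have : 1 - v + v ^ 2 - 1 / (1 + v) = v ^ 3 / (1 + v) := by field_simp; ring
      rw [this]
      positivity
  have h0 : (fun w : ℝ => w - w ^ 2 / 2 + w ^ 3 / 3 - Real.log (1 + w)) 0 = 0 := by simp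
  have := hmono (Set.self_mem_Ici) (Set.mem_Ici.2 hu) hu
  rw [h0] at this
  linarith [this]

lemma quartic_le_log {u : ℝ} (hu : 0 ≤ u) :
    u - u ^ 2 / 2 + u ^ 3 / 3 - u ^ 4 / 4 ≤ Real.log (1 + u) := by
  have key : ∀ v ∈ Set.Ici (0:ℝ), HasDerivAt
      (fun w => Real.log (1 + w) - (w - w ^ 2 / 2 + w ^ 3 / 3 - w ^ 4 / 4))
      (1 / (1 + v) - (1 - v + v ^ 2 - v ^ 3)) v := by
    intro v hv
    have hv0 : (0:ℝ) ≤ v := hv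
    have h1v : (0:ℝ) < 1 + v := by linarith
    have hlog : HasDerivAt (fun w : ℝ => Real.log (1 + w)) (1 / (1 + v)) v := by
      have := ((hasDerivAt_id v).const_add 1).log h1v.ne'
      simpa using this
    have hpoly : HasDerivAt (fun w : ℝ => w - w ^ 2 / 2 + w ^ 3 / 3 - w ^ 4 / 4)
        (1 - v + v ^ 2 - v ^ 3) v := by
      have h1 := hasDerivAt_id v
      have h2 := ((hasDerivAt_pow 2 v).div_const 2)
      have h3 := ((hasDerivAt_pow 3 v).div_const 3)
      have h4 := ((hasDerivAt_pow 4 v).div_const 4)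
      exact (((h1.sub h2).add h3).sub h4).congr_deriv (by norm_num)
    exact hlog.sub hpoly
  have hmono : MonotoneOn
      (fun w : ℝ => Real.log (1 + w) - (w - w ^ 2 / 2 + w ^ 3 / 3 - w ^ 4 / 4))
      (Set.Ici 0) := by
    apply monotoneOn_of_deriv_nonneg (convex_Ici 0)
    · exact ContinuousOn.sub (ContinuousOn.log (by fun_prop)
        (fun v hv => by have : (0:ℝ) ≤ v := hv; intro h; linarith [h])) (by fun_prop)
    · intro v hv
      exact ((key v (interior_subset hv)).differentiableAt).differentiableWithinAt
    · intro v hv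
      rw [interior_Ici] at hv
      have hv0 : (0:ℝ) < v := hv
      rw [(key v hv0.le).deriv]
      have h1v : (0:ℝ) < 1 + v := by linarith
      have : 1 / (1 + v) - (1 - v + v ^ 2 - v ^ 3) = v ^ 4 / (1 + v) := by
        field_simp; ring
      rw [this]
      positivity
  have h0 : (fun w : ℝ => Real.log (1 + w) - (w - w ^ 2 / 2 + w ^ 3 / 3 - w ^ 4 / 4)) 0
      = 0 := by simp
  have := hmono (Set.self_mem_Ici) (Set.mem_Ici.2 hu) hu
  rw [h0] at this
  linarith [this]

lemma log_le_quadratic_of_nonpos {u : ℝ} (h1 : -1 < u) (h2 : u ≤ 0) :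
    Real.log (1 + u) ≤ u - u ^ 2 / 2 := by
  have key : ∀ v ∈ Set.Ioc (-1:ℝ) 0, HasDerivAt
      (fun w => (w - w ^ 2 / 2) - Real.log (1 + w))
      ((1 - v) - 1 / (1 + v)) v := by
    intro v hv
    have h1v : (0:ℝ) < 1 + v := by linarith [hv.1]
    have hlog : HasDerivAt (fun w : ℝ => Real.log (1 + w)) (1 / (1 + v)) v := by
      have := ((hasDerivAt_id v).const_add 1).log h1v.ne'
      simpa using this
    have hpoly : HasDerivAt (fun w : ℝ => w - w ^ 2 / 2) (1 - v) v := by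
      have h1 := hasDerivAt_id v
      have h2 := ((hasDerivAt_pow 2 v).div_const 2)
      exact (h1.sub h2).congr_deriv (by norm_num)
    exact hpoly.sub hlog
  have hanti : AntitoneOn (fun w : ℝ => (w - w ^ 2 / 2) - Real.log (1 + w))
      (Set.Ioc (-1) 0) := by
    apply antitoneOn_of_deriv_nonpos (convex_Ioc (-1) 0)
    · exact ContinuousOn.sub (by fun_prop) (ContinuousOn.log (by fun_prop)
        (fun v hv => by intro h; linarith [hv.1]))
    · intro v hv
      rw [interior_Ioc] at hv
      exact ((key v (Set.Ioo_subset_Ioc_self hv)).differentiableAt).differentiableWithinAt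
    · intro v hv
      rw [interior_Ioc] at hv
      rw [(key v (Set.Ioo_subset_Ioc_self hv)).deriv]
      have h1v : (0:ℝ) < 1 + v := by linarith [hv.1]
      have : (1 - v) - 1 / (1 + v) = -(v ^ 2 / (1 + v)) := by field_simp; ring
      rw [this]
      have : 0 ≤ v ^ 2 / (1 + v) := by positivity
      linarith
  have h0 : (fun w : ℝ => (w - w ^ 2 / 2) - Real.log (1 + w)) 0 = 0 := by simp
  have := hanti (Set.mem_Ioc.2 ⟨h1, h2⟩) (Set.mem_Ioc.2 ⟨by linarith, le_refl 0⟩) h2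
  rw [h0] at this
  linarith [this]

noncomputable def gAux (x : ℝ) : ℝ :=
  digamma x - Real.log x + 1 / (2 * x) + 1 / (12 * x ^ 2)

lemma gAux_crude {x : ℝ} (hx : 1 ≤ x) : |gAux x| ≤ 2 / x := by
  have hx0 : (0:ℝ) < x := lt_of_lt_of_le one_pos hx
  have f1 := digamma_le_log hx0
  have f2 := log_sub_le_digamma hx0
  have f3 : 1 / (2 * x) ≤ 1 / x := one_div_le_one_div_of_le hx0 (by linarith)
  have f4 : 1 / (12 * x ^ 2) ≤ 1 / x := one_div_le_one_div_of_le hx0 (by nlinarith)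
  have f5 : (0:ℝ) ≤ 1 / (2 * x) := by positivity
  have f6 : (0:ℝ) ≤ 1 / (12 * x ^ 2) := by positivity
  have f7 : (0:ℝ) ≤ 1 / x := by positivity
  have h2x : 2 / x = 1 / x + 1 / x := by ring
  rw [abs_le]
  unfold gAux
  constructor <;> [skip; skip] <;> linarith

lemma cexpr_bound {u : ℝ} (h0 : 0 < u) (h1 : u ≤ 1) :
    |u - Real.log (1 + u) + (u / (2 * (1 + u)) - u / 2)
      + (u ^ 2 / (12 * (1 + u) ^ 2) - u ^ 2 / 12)| ≤ u ^ 4 := by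
  have h1u : (0:ℝ) < 1 + u := by linarith
  have hL1 := log_le_cubic h0.le
  have hL2 := quartic_le_log h0.le
  have hR : (u / (2 * (1 + u)) - u / 2) + (u ^ 2 / (12 * (1 + u) ^ 2) - u ^ 2 / 12)
      = -((6 * u ^ 2 * (1 + u) + u ^ 3 * (2 + u)) / (12 * (1 + u) ^ 2)) := by
    field_simp
    ring
  rw [abs_le]
  constructor
  · -- lower bound
    have key : 0 ≤ (u ^ 2 / 2 - u ^ 3 / 3) + ((u / (2 * (1 + u)) - u / 2)
        + (u ^ 2 / (12 * (1 + u) ^ 2) - u ^ 2 / 12)) + u ^ 4 := by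
      rw [hR]
      have hid : (u ^ 2 / 2 - u ^ 3 / 3)
          - (6 * u ^ 2 * (1 + u) + u ^ 3 * (2 + u)) / (12 * (1 + u) ^ 2) + u ^ 4
          = u ^ 4 * (9 + 20 * u + 12 * u ^ 2) / (12 * (1 + u) ^ 2) := by
        field_simp
        ring
      have : (0:ℝ) ≤ u ^ 4 * (9 + 20 * u + 12 * u ^ 2) / (12 * (1 + u) ^ 2) := by
        positivity
      linarith [hid ▸ this]
    linarith
  · -- upper bound
    have key : (u ^ 2 / 2 - u ^ 3 / 3 + u ^ 4 / 4) + ((u / (2 * (1 + u)) - u / 2)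
        + (u ^ 2 / (12 * (1 + u) ^ 2) - u ^ 2 / 12)) ≤ u ^ 4 := by
      rw [hR]
      have hid : u ^ 4 - ((u ^ 2 / 2 - u ^ 3 / 3 + u ^ 4 / 4)
          - (6 * u ^ 2 * (1 + u) + u ^ 3 * (2 + u)) / (12 * (1 + u) ^ 2))
          = u ^ 4 * (12 + 22 * u + 9 * u ^ 2) / (12 * (1 + u) ^ 2) := by
        field_simp
        ring
      have : (0:ℝ) ≤ u ^ 4 * (12 + 22 * u + 9 * u ^ 2) / (12 * (1 + u) ^ 2) := by
        positivity
      linarith [hid ▸ this]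
    linarith

lemma cAux_bound {x : ℝ} (hx : 1 ≤ x) : |gAux (x + 1) - gAux x| ≤ 1 / x ^ 4 := by
  have hx0 : (0:ℝ) < x := lt_of_lt_of_le one_pos hx
  have hx1 : (0:ℝ) < x + 1 := by linarith
  set u := 1 / x with hu
  have hu0 : 0 < u := by positivity
  have hu1 : u ≤ 1 := by rw [hu]; rw [div_le_one hx0]; linarith
  have hrec : digamma (x + 1) = digamma x + 1 / x := digamma_add_one hx0
  have hlog : Real.log (x + 1) = Real.log x + Real.log (1 + u) := by
    rw [hu, ← Real.log_mul hx0.ne' (by positivity : (1 + 1/x) ≠ 0)]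
    congr 1
    field_simp
  have hexpr : gAux (x + 1) - gAux x
      = u - Real.log (1 + u) + (u / (2 * (1 + u)) - u / 2)
        + (u ^ 2 / (12 * (1 + u) ^ 2) - u ^ 2 / 12) := by
    unfold gAux
    rw [hrec, hlog, hu]
    have h1u : (1:ℝ) + 1 / x ≠ 0 := by positivity
    field_simp
    ring
  rw [hexpr]
  have := cexpr_bound hu0 hu1
  have hu4 : u ^ 4 = 1 / x ^ 4 := by rw [hu]; field_simp
  linarith [this, hu4 ▸ this]

lemma telescope (x : ℝ) (N : ℕ) :
    gAux (x + N) - gAux x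
      = ∑ k ∈ Finset.range N, (gAux (x + k + 1) - gAux (x + k)) := by
  induction N with
  | zero => simp
  | succ M ih =>
    rw [Finset.sum_range_succ, ← ih]
    have h : x + ((M:ℝ) + 1) = x + (M:ℝ) + 1 := by ring
    push_cast
    rw [h]
    ring

lemma sum_quartic_shift {x : ℝ} (hx : 1 ≤ x) (N : ℕ) :
    ∑ k ∈ Finset.range N, 1 / (x + 1 + k) ^ 4
      ≤ 1 / (3 * x ^ 3) - 1 / (3 * (x + N) ^ 3) := by
  induction N with
  | zero => simp
  | succ M ih =>
    rw [Finset.sum_range_succ]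
    have ha : (0:ℝ) < x + M := by
      have : (0:ℝ) ≤ (M:ℝ) := Nat.cast_nonneg M
      linarith
    have ha1 : (0:ℝ) < x + M + 1 := by linarith
    have step : 1 / (x + 1 + M) ^ 4
        ≤ 1 / (3 * (x + M) ^ 3) - 1 / (3 * (x + M + 1) ^ 3) := by
      have hid : 1 / (3 * (x + M) ^ 3) - 1 / (3 * (x + M + 1) ^ 3) - 1 / (x + 1 + M) ^ 4
          = (6 * (x + M) ^ 2 + 4 * (x + M) + 1)
            / (3 * (x + M) ^ 3 * (x + M + 1) ^ 4) := by
        have h1 : (x + 1 + (M:ℝ)) = (x + M + 1) := by ring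
        rw [h1]
        field_simp
        ring
      have hpos : (0:ℝ) ≤ (6 * (x + M) ^ 2 + 4 * (x + M) + 1)
          / (3 * (x + M) ^ 3 * (x + M + 1) ^ 4) := by positivity
      linarith [hid ▸ hpos]
    have hcast : x + ((M:ℝ) + 1) = x + (M:ℝ) + 1 := by ring
    push_cast
    rw [hcast]
    push_cast at ih
    linarith

lemma sum_quartic {x : ℝ} (hx : 1 ≤ x) (N : ℕ) :
    ∑ k ∈ Finset.range N, 1 / (x + k) ^ 4 ≤ 1 / x ^ 4 + 1 / (3 * x ^ 3) := by
  have hx0 : (0:ℝ) < x := lt_of_lt_of_le one_pos hx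
  cases N with
  | zero =>
    simp only [Finset.range_zero, Finset.sum_empty]
    positivity
  | succ M =>
    rw [Finset.sum_range_succ']
    have h1 : ∑ k ∈ Finset.range M, 1 / (x + ((k:ℝ) + 1)) ^ 4
        = ∑ k ∈ Finset.range M, 1 / (x + 1 + (k:ℝ)) ^ 4 :=
      Finset.sum_congr rfl (fun k _ => by ring_nf)
    have h2 := sum_quartic_shift hx M
    have h3 : (0:ℝ) ≤ 1 / (3 * (x + M) ^ 3) := by
      have : (0:ℝ) ≤ (M:ℝ) := Nat.cast_nonneg M
      positivity
    push_cast
    rw [h1]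
    simp only [Nat.cast_zero, add_zero]
    linarith

lemma gAux_bound {x : ℝ} (hx : 1 ≤ x) : |gAux x| ≤ 2 / x ^ 3 := by
  have hx0 : (0:ℝ) < x := lt_of_lt_of_le one_pos hx
  have key : ∀ N : ℕ, |gAux x| ≤ 2 / (x + N) + (1 / x ^ 4 + 1 / (3 * x ^ 3)) := by
    intro N
    have hT := telescope x N
    have h1 : |gAux x| ≤ |gAux (x + N)|
        + ∑ k ∈ Finset.range N, |gAux (x + k + 1) - gAux (x + k)| := by
      have hg : gAux x = gAux (x + N)
          - ∑ k ∈ Finset.range N, (gAux (x + k + 1) - gAux (x + k)) := by linarith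
      rw [hg]
      refine (abs_sub _ _).trans (add_le_add le_rfl ?_)
      exact Finset.abs_sum_le_sum_abs _ _
    have h2 : |gAux (x + N)| ≤ 2 / (x + N) := by
      apply gAux_crude
      have : (0:ℝ) ≤ (N:ℝ) := Nat.cast_nonneg N
      linarith
    have h3 : ∑ k ∈ Finset.range N, |gAux (x + k + 1) - gAux (x + k)|
        ≤ ∑ k ∈ Finset.range N, 1 / (x + k) ^ 4 := by
      apply Finset.sum_le_sum
      intro k _
      have hk : (0:ℝ) ≤ (k:ℝ) := Nat.cast_nonneg k
      exact cAux_bound (by linarith)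
    have h4 := sum_quartic hx N
    linarith
  have hlim : Tendsto (fun N : ℕ => 2 / (x + N) + (1 / x ^ 4 + 1 / (3 * x ^ 3))) atTop
      (nhds (0 + (1 / x ^ 4 + 1 / (3 * x ^ 3)))) := by
    apply Tendsto.add _ tendsto_const_nhds
    apply Tendsto.div_atTop tendsto_const_nhds
    exact tendsto_atTop_add_const_left _ x tendsto_natCast_atTop_atTop
  have hfin : |gAux x| ≤ 0 + (1 / x ^ 4 + 1 / (3 * x ^ 3)) := ge_of_tendsto' hlim key
  have e1 : 1 / x ^ 4 ≤ 1 / x ^ 3 := one_div_le_one_div_of_le (by positivity) (by nlinarith [pow_le_pow_right₀ hx (by norm_num : 3 ≤ 4)])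
  have e2 : 1 / (3 * x ^ 3) ≤ 1 / x ^ 3 := one_div_le_one_div_of_le (by positivity) (by nlinarith [pow_pos hx0 3])
  have e3 : 2 / x ^ 3 = 1 / x ^ 3 + 1 / x ^ 3 := by ring
  linarith

lemma digamma_asympt {x : ℝ} (hx : 1 ≤ x) :
    |digamma x - Real.log x + 1 / (2 * x) + 1 / (12 * x ^ 2)| ≤ 2 / x ^ 3 :=
  gAux_bound hx

lemma rat_lower {t s x : ℝ} (hs : 0 < s) (hx : 1 ≤ x) (hts : 0 ≤ t - s) :
    (t - s) ^ 2 / (2 * x ^ 2) - ((t - s) ^ 2 * s * (2 + s) / 2 + (t - s) ^ 3 / 3) / x ^ 3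
      ≤ ((t - s) / (x + s)) ^ 2 / 2 - ((t - s) / (x + s)) ^ 3 / 3 := by
  have hx0 : (0:ℝ) < x := lt_of_lt_of_le one_pos hx
  have hxs : (0:ℝ) < x + s := by linarith
  rw [← sub_nonneg]
  have hid : ((t - s) / (x + s)) ^ 2 / 2 - ((t - s) / (x + s)) ^ 3 / 3
      - ((t - s) ^ 2 / (2 * x ^ 2) - ((t - s) ^ 2 * s * (2 + s) / 2 + (t - s) ^ 3 / 3) / x ^ 3)
      = ((t - s) ^ 2 * (3 * s * (x + s) * ((2 + s) * (x + s) ^ 2 - x * (2 * x + s)))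
          + (t - s) ^ 3 * (2 * ((x + s) ^ 3 - x ^ 3))) / (6 * x ^ 3 * (x + s) ^ 3) := by
    field_simp
    ring
  rw [hid]
  apply div_nonneg _ (by positivity)
  have h1 : (0:ℝ) ≤ (2 + s) * (x + s) ^ 2 - x * (2 * x + s) := by nlinarith
  have h2 : (0:ℝ) ≤ (x + s) ^ 3 - x ^ 3 := by
    nlinarith [mul_nonneg (mul_nonneg hxs.le hxs.le) hs.le,
      mul_nonneg (mul_nonneg hxs.le hx0.le) hs.le,
      mul_nonneg (mul_nonneg hx0.le hx0.le) hs.le]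
  have h3 : (0:ℝ) ≤ (t - s) ^ 2 := sq_nonneg _
  have h4 : (0:ℝ) ≤ (t - s) ^ 3 := by positivity
  have h5 : (0:ℝ) ≤ 3 * s * (x + s) := by positivity
  nlinarith [mul_nonneg (mul_nonneg h3 h5) h1, mul_nonneg h4 h2]

lemma rat_lower_neg {t s x : ℝ} (hs : 0 < s) (hx : 1 ≤ x) :
    (t - s) ^ 2 / (2 * x ^ 2) - ((t - s) ^ 2 * s * (2 + s) / 2) / x ^ 3
      ≤ ((t - s) / (x + s)) ^ 2 / 2 := by
  have hx0 : (0:ℝ) < x := lt_of_lt_of_le one_pos hx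
  have hxs : (0:ℝ) < x + s := by linarith
  rw [← sub_nonneg]
  have hid : ((t - s) / (x + s)) ^ 2 / 2
      - ((t - s) ^ 2 / (2 * x ^ 2) - ((t - s) ^ 2 * s * (2 + s) / 2) / x ^ 3)
      = ((t - s) ^ 2 * (s * ((2 + s) * (x + s) ^ 2 - x * (2 * x + s))))
          / (2 * x ^ 3 * (x + s) ^ 2) := by
    field_simp
    ring
  rw [hid]
  apply div_nonneg _ (by positivity)
  have h1 : (0:ℝ) ≤ (2 + s) * (x + s) ^ 2 - x * (2 * x + s) := by nlinarith
  have h3 : (0:ℝ) ≤ (t - s) ^ 2 := sq_nonneg _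
  nlinarith [mul_nonneg (mul_nonneg h3 hs.le) h1]

lemma phi_part_lower {t x : ℝ} (ht : 0 < t) (hx : 1 ≤ x) :
    -(t / (2 * x ^ 2)) - (4 + (2 * t + t ^ 2) / 12) / x ^ 3
      ≤ phiFn x - phiFn (x + t) := by
  have hx0 : (0:ℝ) < x := lt_of_lt_of_le one_pos hx
  have hxt : (1:ℝ) ≤ x + t := by linarith
  have hxt0 : (0:ℝ) < x + t := by linarith
  have hA := abs_le.1 (digamma_asympt hx)
  have hB := abs_le.1 (digamma_asympt hxt)
  have hcube : 2 / (x + t) ^ 3 ≤ 2 / x ^ 3 := by gcongr <;> linarith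
  have hB1 : 1 / (2 * x) - 1 / (2 * (x + t)) ≤ t / (2 * x ^ 2) := by
    have hB1id : 1 / (2 * x) - 1 / (2 * (x + t)) = t / (2 * (x * (x + t))) := by
      field_simp
      ring
    rw [hB1id]
    gcongr
    nlinarith
  have hB2 : 1 / (12 * x ^ 2) - 1 / (12 * (x + t) ^ 2) ≤ (2 * t + t ^ 2) / (12 * x ^ 3) := by
    have hB2id : 1 / (12 * x ^ 2) - 1 / (12 * (x + t) ^ 2)
        = t * (2 * x + t) / (12 * (x ^ 2 * (x + t) ^ 2)) := by
      field_simp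
      ring
    rw [hB2id, div_le_div_iff₀ (by positivity) (by positivity)]
    nlinarith [mul_pos hx0 ht, mul_pos (mul_pos hx0 hx0) (mul_pos hx0 ht),
      mul_nonneg (mul_nonneg ht.le ht.le) (mul_nonneg ht.le hx0.le)]
  have hsplit : (4 + (2 * t + t ^ 2) / 12) / x ^ 3
      = 4 / x ^ 3 + (2 * t + t ^ 2) / (12 * x ^ 3) := by ring
  have h4 : (4:ℝ) / x ^ 3 = 2 / x ^ 3 + 2 / x ^ 3 := by ring
  unfold phiFn
  linarith [hA.1, hA.2, hB.1, hB.2]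

lemma elem_lower {t s x : ℝ} (ht : 0 < t) (hs : 0 < s) (hx : 1 ≤ x) :
    (t - s) ^ 2 / (2 * x ^ 2) - ((t - s) ^ 2 * s * (2 + s) / 2 + |t - s| ^ 3 / 3) / x ^ 3
      ≤ (x + t) / (x + s) - Real.log ((x + t) / (x + s)) - 1 := by
  have hx0 : (0:ℝ) < x := lt_of_lt_of_le one_pos hx
  have hxs : (0:ℝ) < x + s := by linarith
  have hxt : (0:ℝ) < x + t := by linarith
  set v := (t - s) / (x + s) with hv
  have hvid : (x + t) / (x + s) = 1 + v := by
    rw [hv]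
    field_simp
    ring
  rw [hvid]
  have hv1 : -1 < v := by
    have : 0 < 1 + v := by rw [← hvid]; positivity
    linarith
  rcases le_or_gt s t with hst | hst
  · -- v ≥ 0
    have hv0 : 0 ≤ v := by
      apply div_nonneg _ hxs.le
      linarith
    have hlog := log_le_cubic hv0
    have habs : |t - s| = t - s := abs_of_nonneg (by linarith)
    rw [habs]
    have := rat_lower hs hx (by linarith : (0:ℝ) ≤ t - s)
    rw [← hv] at this
    linarith
  · -- v < 0
    have hv0 : v ≤ 0 := by
      apply le_of_lt
      apply div_neg_of_neg_of_pos _ hxs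
      linarith
    have hlog := log_le_quadratic_of_nonpos hv1 hv0
    have hnn : (0:ℝ) ≤ (|t - s| ^ 3 / 3) / x ^ 3 := by positivity
    have hsplit : ((t - s) ^ 2 * s * (2 + s) / 2 + |t - s| ^ 3 / 3) / x ^ 3
        = ((t - s) ^ 2 * s * (2 + s) / 2) / x ^ 3 + (|t - s| ^ 3 / 3) / x ^ 3 := by ring
    have := rat_lower_neg (t := t) hs hx
    rw [← hv] at this
    linarith

lemma Fs_lower (t s : ℝ) (ht : 0 < t) (hs : 0 < s) :
    ∃ C : ℝ, 0 ≤ C ∧ ∀ x : ℝ, 1 ≤ x →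
      ((t - s) ^ 2 - t) / (2 * x ^ 2) - C / x ^ 3 ≤ Fs t s x := by
  refine ⟨(4 + (2 * t + t ^ 2) / 12) + ((t - s) ^ 2 * s * (2 + s) / 2 + |t - s| ^ 3 / 3),
    by positivity, ?_⟩
  intro x hx
  have h1 := phi_part_lower ht hx
  have h2 := elem_lower ht hs hx
  unfold Fs
  have hsplit : ((t - s) ^ 2 - t) / (2 * x ^ 2)
      = (t - s) ^ 2 / (2 * x ^ 2) - t / (2 * x ^ 2) := by ring
  have hCsplit : ((4 + (2 * t + t ^ 2) / 12) + ((t - s) ^ 2 * s * (2 + s) / 2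
      + |t - s| ^ 3 / 3)) / x ^ 3
      = (4 + (2 * t + t ^ 2) / 12) / x ^ 3
        + ((t - s) ^ 2 * s * (2 + s) / 2 + |t - s| ^ 3 / 3) / x ^ 3 := by ring
  linarith

lemma analyticOnNhd_complexGamma :
    AnalyticOnNhd ℂ Complex.Gamma {z : ℂ | 0 < z.re} := by
  apply DifferentiableOn.analyticOnNhd _ (isOpen_lt continuous_const Complex.continuous_re)
  intro z hz
  apply (Complex.differentiableAt_Gamma z ?_).differentiableWithinAt
  intro m hm
  have h2 : z.re = (-(m:ℂ)).re := by rw [hm]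
  simp only [Complex.neg_re, Complex.natCast_re] at h2
  have hm0 : (0:ℝ) ≤ (m:ℝ) := Nat.cast_nonneg m
  have h3 := hz
  simp only [Set.mem_setOf_eq] at h3
  linarith

lemma analyticAt_realGamma {x : ℝ} (hx : 0 < x) : AnalyticAt ℝ Real.Gamma x := by
  have h1 : AnalyticAt ℂ Complex.Gamma (x : ℂ) :=
    analyticOnNhd_complexGamma _ (by simpa using hx)
  have h2 : AnalyticAt ℝ (fun y : ℝ => Complex.Gamma (y : ℂ)) x :=
    (h1.restrictScalars).comp (Complex.ofRealCLM.analyticAt x)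
  have h3 : AnalyticAt ℝ (fun y : ℝ => (Complex.Gamma (y : ℂ)).re) x :=
    (Complex.reCLM.analyticAt _).comp h2
  have h4 : (fun y : ℝ => (Complex.Gamma (y : ℂ)).re) = Real.Gamma := by
    funext y
    rw [Complex.Gamma_ofReal, Complex.ofReal_re]
  rwa [h4] at h3

lemma analyticOnNhd_realGamma : AnalyticOnNhd ℝ Real.Gamma (Set.Ioi 0) :=
  fun _ hx => analyticAt_realGamma (Set.mem_Ioi.1 hx)

lemma continuousAt_deriv_realGamma {x : ℝ} (hx : 0 < x) :
    ContinuousAt (deriv Real.Gamma) x :=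
  ((analyticOnNhd_realGamma.deriv) x (Set.mem_Ioi.2 hx)).continuousAt

lemma digamma_eq_div {x : ℝ} (hx : 0 < x) :
    digamma x = deriv Real.Gamma x / Real.Gamma x := by
  have h := ((diffGamma hx).hasDerivAt).log (Real.Gamma_pos_of_pos hx).ne'
  exact h.deriv

lemma continuousOn_digamma : ContinuousOn digamma (Set.Ioi 0) := by
  intro x hx
  have hx0 : (0:ℝ) < x := Set.mem_Ioi.1 hx
  apply ContinuousAt.continuousWithinAt
  have hct : ContinuousAt (fun y => deriv Real.Gamma y / Real.Gamma y) x :=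
    (continuousAt_deriv_realGamma hx0).div ((diffGamma hx0).continuousAt)
      (Real.Gamma_pos_of_pos hx0).ne'
  apply hct.congr
  filter_upwards [eventually_gt_nhds hx0] with y hy
  exact (digamma_eq_div hy).symm

lemma continuousOn_phiFn : ContinuousOn phiFn (Set.Ioi 0) := by
  apply continuousOn_digamma.sub
  exact Real.continuousOn_log.mono (fun y hy => by
    simp only [Set.mem_compl_iff, Set.mem_singleton_iff]
    exact ne_of_gt (Set.mem_Ioi.1 hy))

lemma continuousOn_Fs {t s : ℝ} (ht : 0 < t) (hs : 0 < s) :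
    ContinuousOn (Fs t s) (Set.Ioi 0) := by
  have hmap : ∀ y ∈ Set.Ioi (0:ℝ), y + t ∈ Set.Ioi (0:ℝ) := fun y hy => by
    simp only [Set.mem_Ioi] at *
    linarith
  have hden : ∀ y ∈ Set.Ioi (0:ℝ), y + s ≠ 0 := fun y hy => by
    have : (0:ℝ) < y := hy
    positivity
  have h1 : ContinuousOn (fun y => phiFn (y + t)) (Set.Ioi 0) :=
    continuousOn_phiFn.comp (Continuous.continuousOn (by continuity)) hmap
  have h2 : ContinuousOn (fun y : ℝ => (y + t) / (y + s)) (Set.Ioi 0) :=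
    ContinuousOn.div (Continuous.continuousOn (by continuity))
      (Continuous.continuousOn (by continuity)) hden
  have h3 : ContinuousOn (fun y : ℝ => Real.log ((y + t) / (y + s))) (Set.Ioi 0) := by
    apply ContinuousOn.log h2
    intro y hy
    have hy0 : (0:ℝ) < y := hy
    positivity
  exact ((((continuousOn_phiFn.sub h1).add h2).sub h3).sub continuousOn_const)

lemma Fs_small (t s : ℝ) (ht : 0 < t) (hs : 0 < s) :
    ∃ K : ℝ, ∀ y : ℝ, 0 < y → y ≤ 1 → Fs t s y ≤ K - 1 / y - Real.log y := by
  refine ⟨digamma 2 - digamma t + Real.log (1 + t) + (1 + t) / s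
    + (Real.log (1 + s) - Real.log t) - 1, ?_⟩
  intro y hy0 hy1
  unfold Fs phiFn
  have h1 : digamma y = digamma (y + 1) - 1 / y := by rw [digamma_add_one hy0]; ring
  have h2 : digamma (y + 1) ≤ digamma 2 := digamma_mono (by linarith) (by linarith)
  have h3 : digamma t ≤ digamma (y + t) := digamma_mono ht (by linarith)
  have h4 : Real.log (y + t) ≤ Real.log (1 + t) := Real.log_le_log (by linarith) (by linarith)
  have h5 : (y + t) / (y + s) ≤ (1 + t) / s :=
    div_le_div₀ (by linarith) (by linarith) hs (by linarith)
  have h6 : Real.log ((y + t) / (y + s)) = Real.log (y + t) - Real.log (y + s) :=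
    Real.log_div (by positivity) (by positivity)
  have h7 : Real.log (y + s) ≤ Real.log (1 + s) := Real.log_le_log (by positivity) (by linarith)
  have h8 : Real.log t ≤ Real.log (y + t) := Real.log_le_log ht (by linarith)
  rw [h6, h1]
  linarith


/-- with `t = d/2`, `d ≥ 1`, samples `x_i ∈ ℝ^d`, weights `w_i > 0` summing to 1,
`μ ∈ ℝ^d`, `Σ` symmetric positive definite, `δ_i := (x_i − μ)ᵀ Σ⁻¹ (x_i − μ)`, `s_i := δ_i/2`
and `F := Σᵢ wᵢ F_{s_i}`: if `δ_i > 0` and `δ_i ∉ [d − √(2d), d + √(2d)]` for all `i`, then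
there exists `x₊ > 0` with `F(x) > 0` for all `x ≥ x₊`; in particular `F` has a zero
on `(0,∞)`. -/
theorem F_pos_eventually_and_has_zero (d n : ℕ) (hd : 1 ≤ d) (t : ℝ) (ht : t = d / 2)
    (x : Fin n → Fin d → ℝ) (w : Fin n → ℝ) (hw : ∀ i, 0 < w i) (hw1 : ∑ i, w i = 1)
    (μ : Fin d → ℝ) (S : Matrix (Fin d) (Fin d) ℝ) (hS : S.PosDef)
    (δ : Fin n → ℝ) (hδ : ∀ i, δ i = (x i - μ) ⬝ᵥ S⁻¹ *ᵥ (x i - μ))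
    (hδpos : ∀ i, 0 < δ i)
    (hδnotmem : ∀ i, δ i ∉
      Set.Icc ((d : ℝ) - Real.sqrt (2 * d)) ((d : ℝ) + Real.sqrt (2 * d))) :
    (∃ xp > (0 : ℝ), ∀ y ≥ xp, 0 < ∑ i, w i * Fs t (δ i / 2) y) ∧
    ∃ y > (0 : ℝ), ∑ i, w i * Fs t (δ i / 2) y = 0 := by
  have hn : n ≠ 0 := by
    intro h
    subst h
    simp at hw1
  have hne : (Finset.univ : Finset (Fin n)).Nonempty := by
    rw [Finset.univ_nonempty_iff]
    exact Fin.pos_iff_nonempty.1 (Nat.pos_of_ne_zero hn)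
  have hd1 : (1:ℝ) ≤ (d:ℝ) := by exact_mod_cast hd
  have ht0 : 0 < t := by rw [ht]; linarith
  have hs : ∀ i, 0 < δ i / 2 := fun i => by linarith [hδpos i]
  have hε : ∀ i, 0 < (t - δ i / 2) ^ 2 - t := by
    intro i
    have hd2 : (0:ℝ) ≤ 2 * d := by positivity
    have hsq : Real.sqrt (2 * d) ^ 2 = 2 * d := Real.sq_sqrt hd2
    have hsqnn : 0 ≤ Real.sqrt (2 * d) := Real.sqrt_nonneg _
    have hkey : 2 * (d:ℝ) < (δ i - d) ^ 2 := by
      have hmem := hδnotmem i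
      rw [Set.mem_Icc, not_and_or] at hmem
      rcases hmem with h | h
      · push_neg at h
        have h1 : 0 < (d:ℝ) - Real.sqrt (2 * d) - δ i + Real.sqrt (2*d) := by linarith
        nlinarith [mul_pos (by linarith : (0:ℝ) < d - δ i - Real.sqrt (2*d))
          (by linarith : (0:ℝ) < d - δ i + Real.sqrt (2*d))]
      · push_neg at h
        nlinarith [mul_pos (by linarith : (0:ℝ) < δ i - d - Real.sqrt (2*d))
          (by linarith : (0:ℝ) < δ i - d + Real.sqrt (2*d))]
    have hid : (t - δ i / 2) ^ 2 - t = ((δ i - d) ^ 2 - 2 * d) / 4 := by rw [ht]; ring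
    rw [hid]
    linarith
  choose C hC0 hC using fun i => Fs_lower t (δ i / 2) ht0 (hs i)
  obtain ⟨i0, _, hi0⟩ := Finset.exists_min_image Finset.univ
    (fun i => (t - δ i / 2) ^ 2 - t) hne
  obtain ⟨j0, _, hj0⟩ := Finset.exists_max_image Finset.univ C hne
  set ε := (t - δ i0 / 2) ^ 2 - t with hεdef
  set Cm := C j0 with hCmdef
  have hε0 : 0 < ε := hε i0
  have hCm0 : 0 ≤ Cm := hC0 j0
  set xp := 1 + 4 * Cm / ε with hxp
  have hxp1 : (1:ℝ) ≤ xp := by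
    rw [hxp]
    have : 0 ≤ 4 * Cm / ε := by positivity
    linarith
  have hxp0 : (0:ℝ) < xp := by linarith
  have hpos : ∀ y, xp ≤ y → 0 < ∑ i, w i * Fs t (δ i / 2) y := by
    intro y hy
    have hy1 : (1:ℝ) ≤ y := le_trans hxp1 hy
    have hy0 : (0:ℝ) < y := by linarith
    have hconst : 0 < ε / (2 * y ^ 2) - Cm / y ^ 3 := by
      rw [sub_pos, div_lt_div_iff₀ (by positivity) (by positivity)]
      have h2 : ε * xp = ε + 4 * Cm := by
        rw [hxp]
        field_simp
      have h' : ε + 4 * Cm ≤ ε * y := by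
        have := mul_le_mul_of_nonneg_left hy hε0.le
        rw [h2] at this
        exact this
      nlinarith [mul_le_mul_of_nonneg_right h' (sq_nonneg y),
        mul_pos hε0 (mul_pos hy0 hy0), mul_nonneg hCm0 (sq_nonneg y)]
    have hterm : ∀ i, ε / (2 * y ^ 2) - Cm / y ^ 3 ≤ Fs t (δ i / 2) y := by
      intro i
      have h1 := hC i y hy1
      have h2 : ε / (2 * y ^ 2) ≤ ((t - δ i / 2) ^ 2 - t) / (2 * y ^ 2) := by
        gcongr
        exact hi0 i (Finset.mem_univ i)
      have h3 : C i / y ^ 3 ≤ Cm / y ^ 3 := by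
        gcongr
        exact hj0 i (Finset.mem_univ i)
      linarith
    have hsum : ∑ i, w i * (ε / (2 * y ^ 2) - Cm / y ^ 3)
        ≤ ∑ i, w i * Fs t (δ i / 2) y :=
      Finset.sum_le_sum (fun i _ => mul_le_mul_of_nonneg_left (hterm i) (hw i).le)
    rw [← Finset.sum_mul, hw1, one_mul] at hsum
    linarith
  refine ⟨⟨xp, hxp0, fun y hy => hpos y hy⟩, ?_⟩
  choose K hK using fun i => Fs_small t (δ i / 2) ht0 (hs i)
  obtain ⟨k0, _, hk0⟩ := Finset.exists_max_image Finset.univ K hne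
  set M := max (K k0) 0 with hM
  have hM0 : (0:ℝ) ≤ M := le_max_right _ _
  set r := M + 3 with hr
  have hr0 : (0:ℝ) < r := by linarith
  set y0 := 1 / r ^ 2 with hy0def
  have hy00 : 0 < y0 := by positivity
  have hy01 : y0 ≤ 1 := by
    rw [hy0def, div_le_one (by positivity)]
    nlinarith
  have hGy0 : (∑ i, w i * Fs t (δ i / 2) y0) < 0 := by
    have hterm : ∀ i, Fs t (δ i / 2) y0 ≤ -(M ^ 2) - 3 * M - 3 := by
      intro i
      have h1 := hK i y0 hy00 hy01
      have hKi : K i ≤ M := le_trans (hk0 i (Finset.mem_univ i)) (le_max_left _ _)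
      have hinv : 1 / y0 = r ^ 2 := by
        rw [hy0def, one_div_one_div]
      have hlog : Real.log y0 = -(2 * Real.log r) := by
        rw [hy0def, one_div, Real.log_inv, Real.log_pow]
        push_cast
        ring
      have hlogr : Real.log r ≤ r - 1 := Real.log_le_sub_one_of_pos hr0
      rw [hinv, hlog] at h1
      have hr2 : r ^ 2 = M ^ 2 + 6 * M + 9 := by rw [hr]; ring
      linarith
    have hsum : ∑ i, w i * Fs t (δ i / 2) y0 ≤ ∑ i, w i * (-(M ^ 2) - 3 * M - 3) :=
      Finset.sum_le_sum (fun i _ => mul_le_mul_of_nonneg_left (hterm i) (hw i).le)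
    rw [← Finset.sum_mul, hw1, one_mul] at hsum
    nlinarith
  have hGxp : 0 < ∑ i, w i * Fs t (δ i / 2) xp := hpos xp le_rfl
  have hylt : y0 ≤ xp := by
    by_contra hcon
    push_neg at hcon
    have := hpos y0 hcon.le
    linarith
  have hcont : ContinuousOn (fun y => ∑ i, w i * Fs t (δ i / 2) y) (Set.Icc y0 xp) := by
    have hsub : Set.Icc y0 xp ⊆ Set.Ioi 0 := fun z hz => lt_of_lt_of_le hy00 hz.1
    apply ContinuousOn.mono _ hsub
    apply continuousOn_finset_sum
    intro i _
    exact continuousOn_const.mul (continuousOn_Fs ht0 (hs i))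
  have hIVT := intermediate_value_Icc hylt hcont
  have h0mem : (0:ℝ) ∈ Set.Icc ((fun y => ∑ i, w i * Fs t (δ i / 2) y) y0)
      ((fun y => ∑ i, w i * Fs t (δ i / 2) y) xp) := ⟨hGy0.le, hGxp.le⟩
  obtain ⟨y, hyI, hGy⟩ := hIVT h0mem
  exact ⟨y, lt_of_lt_of_le hy00 hyI.1, hGy⟩
end

section
/- If F(x_0) < 0, then the sequence (x_l)_l is strictly increasing and F(x) < 0 for all x ∈ [x_l, x_{l+1}] and all l ∈ ℕ₀. -/
open Real Filter Topology

/-- let `F_a, F_b : (0,∞) → ℝ` be continuous, `F_a` strictly increasing, `F_b`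
strictly decreasing, `F := F_a + F_b`. Let `x₀ > 0` and let `(x_l)` be the sequence where
`x_{l+1}` is the unique zero in `(0,∞)` of `x ↦ F_a(x) + F_b(x_l)`. If `F(x₀) < 0`, then
`(x_l)` is strictly increasing and `F(x) < 0` for all `x ∈ [x_l, x_{l+1}]`, `l ∈ ℕ₀`. -/
theorem seq_strictMono_of_F_neg (Fa Fb : ℝ → ℝ)
    (hFa : ContinuousOn Fa (Set.Ioi 0)) (hFb : ContinuousOn Fb (Set.Ioi 0))
    (hFam : StrictMonoOn Fa (Set.Ioi 0)) (hFbm : StrictAntiOn Fb (Set.Ioi 0))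
    (x : ℕ → ℝ) (hx0 : 0 < x 0)
    (hstep : ∀ l, 0 < x (l + 1) ∧ Fa (x (l + 1)) + Fb (x l) = 0)
    (huniq : ∀ l, ∀ y > (0 : ℝ), Fa y + Fb (x l) = 0 → y = x (l + 1))
    (hneg : Fa (x 0) + Fb (x 0) < 0) :
    StrictMono x ∧ ∀ l, ∀ y ∈ Set.Icc (x l) (x (l + 1)), Fa y + Fb y < 0 := by
  have hpos : ∀ l, 0 < x l := by
    intro l
    cases l with
    | zero => exact hx0
    | succ n => exact (hstep n).1
  have hlt : ∀ l, x l < x (l + 1) := by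
    intro l
    induction l with
    | zero =>
      have h1 : Fa (x 0) < Fa (x 1) := by
        have := (hstep 0).2
        linarith
      exact (hFam.lt_iff_lt (hpos 0) (hpos 1)).mp h1
    | succ n ih =>
      have hb : Fb (x (n + 1)) < Fb (x n) := hFbm (hpos n) (hpos (n + 1)) ih
      have h1 : Fa (x (n + 1)) < Fa (x (n + 2)) := by
        have e1 := (hstep n).2
        have e2 := (hstep (n + 1)).2
        linarith
      exact (hFam.lt_iff_lt (hpos (n + 1)) (hpos (n + 2))).mp h1
  have hmono : StrictMono x := strictMono_nat_of_lt_succ hlt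
  refine ⟨hmono, ?_⟩
  intro l y hy
  have hy0 : 0 < y := lt_of_lt_of_le (hpos l) hy.1
  have e := (hstep l).2
  rcases lt_or_eq_of_le hy.2 with h | h
  · have ha : Fa y < Fa (x (l + 1)) := hFam hy0 (hpos (l + 1)) h
    have hb : Fb y ≤ Fb (x l) := hFbm.antitoneOn (hpos l) hy0 hy.1
    linarith
  · have hb : Fb y < Fb (x l) := hFbm (hpos l) hy0 (h ▸ hlt l)
    have ha : Fa y ≤ Fa (x (l + 1)) := le_of_eq (h ▸ rfl)
    linarith
end

section
/- If F(x_0) > 0, then the sequence (x_l)_l is strictly decreasing and F(x) > 0 for all x ∈ [x_{l+1}, x_l] and all l ∈ ℕ₀. -/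
open Real Filter Topology

/-- let `F_a, F_b : (0,∞) → ℝ` be continuous, `F_a` strictly increasing, `F_b`
strictly decreasing, `F := F_a + F_b`. Let `x₀ > 0` and let `(x_l)` be the sequence where
`x_{l+1}` is the unique zero in `(0,∞)` of `x ↦ F_a(x) + F_b(x_l)`. If `F(x₀) > 0`, then
`(x_l)` is strictly decreasing and `F(x) > 0` for all `x ∈ [x_{l+1}, x_l]`, `l ∈ ℕ₀`. -/
theorem seq_strictAnti_of_F_pos (Fa Fb : ℝ → ℝ)
    (hFa : ContinuousOn Fa (Set.Ioi 0)) (hFb : ContinuousOn Fb (Set.Ioi 0))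
    (hFam : StrictMonoOn Fa (Set.Ioi 0)) (hFbm : StrictAntiOn Fb (Set.Ioi 0))
    (x : ℕ → ℝ) (hx0 : 0 < x 0)
    (hstep : ∀ l, 0 < x (l + 1) ∧ Fa (x (l + 1)) + Fb (x l) = 0)
    (huniq : ∀ l, ∀ y > (0 : ℝ), Fa y + Fb (x l) = 0 → y = x (l + 1))
    (hpos : 0 < Fa (x 0) + Fb (x 0)) :
    StrictAnti x ∧ ∀ l, ∀ y ∈ Set.Icc (x (l + 1)) (x l), 0 < Fa y + Fb y := by
  have hxpos : ∀ l, 0 < x l := by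
    intro l
    cases l with
    | zero => exact hx0
    | succ n => exact (hstep n).1
  have key : ∀ l, 0 < Fa (x l) + Fb (x l) →
      x (l + 1) < x l ∧ ∀ y ∈ Set.Icc (x (l + 1)) (x l), 0 < Fa y + Fb y := by
    intro l hl
    have h1 : Fa (x (l + 1)) + Fb (x l) = 0 := (hstep l).2
    have hlt : x (l + 1) < x l := by
      by_contra h
      push_neg at h
      have : Fa (x l) ≤ Fa (x (l + 1)) :=
        hFam.monotoneOn (Set.mem_Ioi.mpr (hxpos l)) (Set.mem_Ioi.mpr (hxpos (l + 1))) h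
      linarith
    refine ⟨hlt, ?_⟩
    intro y hy
    have hy0 : 0 < y := lt_of_lt_of_le (hxpos (l + 1)) hy.1
    rcases eq_or_lt_of_le hy.1 with heq | hgt
    · have hylt : y < x l := heq ▸ hlt
      have : Fb (x l) < Fb y := hFbm (Set.mem_Ioi.mpr hy0) (Set.mem_Ioi.mpr (hxpos l)) hylt
      rw [← heq] at *
      linarith
    · have h2 : Fa (x (l + 1)) < Fa y :=
        hFam (Set.mem_Ioi.mpr (hxpos (l + 1))) (Set.mem_Ioi.mpr hy0) hgt
      have h3 : Fb (x l) ≤ Fb y :=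
        hFbm.antitoneOn (Set.mem_Ioi.mpr hy0) (Set.mem_Ioi.mpr (hxpos l)) hy.2
      linarith
  have hF : ∀ l, 0 < Fa (x l) + Fb (x l) := by
    intro l
    induction l with
    | zero => exact hpos
    | succ n ih =>
      exact (key n ih).2 (x (n + 1)) ⟨le_refl _, (key n ih).1.le⟩
  exact ⟨strictAnti_nat_of_succ_lt fun n => (key n (hF n)).1,
    fun l => (key l (hF l)).2⟩
end

section
/- Assume additionally that there exists x_− > 0 with F(x) < 0 for all x < x_− and x_+ > 0 with F(x) > 0 for all x > x_+. Then the sequence (x_l)_l converges to a point x* ∈ (0,∞) with F(x*) = 0. -/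
open Real Filter Topology

lemma limit_zero_aux (Fa Fb : ℝ → ℝ)
    (hFa : ContinuousOn Fa (Set.Ioi 0)) (hFb : ContinuousOn Fb (Set.Ioi 0))
    (x : ℕ → ℝ) (hpos : ∀ l, 0 < x l)
    (hstep : ∀ l, Fa (x (l + 1)) + Fb (x l) = 0)
    (xstar : ℝ) (hxs : 0 < xstar) (ht : Tendsto x atTop (nhds xstar)) :
    Fa xstar + Fb xstar = 0 := by
  have h1 : Tendsto x atTop (nhdsWithin xstar (Set.Ioi 0)) :=
    tendsto_nhdsWithin_iff.mpr ⟨ht, Filter.Eventually.of_forall hpos⟩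
  have h2 : Tendsto (fun l => x (l + 1)) atTop (nhdsWithin xstar (Set.Ioi 0)) :=
    h1.comp (tendsto_add_atTop_nat 1)
  have hA : Tendsto (fun l => Fa (x (l + 1)) + Fb (x l)) atTop
      (nhds (Fa xstar + Fb xstar)) :=
    ((hFa xstar hxs).tendsto.comp h2).add ((hFb xstar hxs).tendsto.comp h1)
  have hB : Tendsto (fun l => Fa (x (l + 1)) + Fb (x l)) atTop (nhds 0) := by
    simpa [hstep] using (tendsto_const_nhds : Tendsto (fun _ : ℕ => (0:ℝ)) atTop (nhds 0))
  exact tendsto_nhds_unique hA hB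

theorem seq_tendsto_zero_of_F (Fa Fb : ℝ → ℝ)
    (hFa : ContinuousOn Fa (Set.Ioi 0)) (hFb : ContinuousOn Fb (Set.Ioi 0))
    (hFam : StrictMonoOn Fa (Set.Ioi 0)) (hFbm : StrictAntiOn Fb (Set.Ioi 0))
    (x : ℕ → ℝ) (hx0 : 0 < x 0)
    (hstep : ∀ l, 0 < x (l + 1) ∧ Fa (x (l + 1)) + Fb (x l) = 0)
    (huniq : ∀ l, ∀ y > (0 : ℝ), Fa y + Fb (x l) = 0 → y = x (l + 1))
    (hminus : ∃ xm > (0 : ℝ), ∀ y, 0 < y → y < xm → Fa y + Fb y < 0)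
    (hplus : ∃ xp > (0 : ℝ), ∀ y, xp < y → 0 < Fa y + Fb y) :
    ∃ xstar > (0 : ℝ), Tendsto x atTop (nhds xstar) ∧ Fa xstar + Fb xstar = 0 := by
  obtain ⟨xm, hxm, hm⟩ := hminus
  obtain ⟨xp, hxp, hp⟩ := hplus
  have hpos : ∀ l, 0 < x l := by
    intro l
    cases l with
    | zero => exact hx0
    | succ n => exact (hstep n).1
  have hmem : ∀ l, x l ∈ Set.Ioi (0:ℝ) := fun l => Set.mem_Ioi.mpr (hpos l)
  -- step lemmas
  have step1 : ∀ l, Fa (x l) + Fb (x l) < 0 → x l < x (l + 1) := by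
    intro l hl
    have h1 : Fa (x l) < Fa (x (l + 1)) := by have := (hstep l).2; linarith
    exact (hFam.lt_iff_lt (hmem l) (hmem (l + 1))).mp h1
  have step2 : ∀ l, Fa (x l) + Fb (x l) < 0 → Fa (x (l + 1)) + Fb (x (l + 1)) < 0 := by
    intro l hl
    have hlt := step1 l hl
    have h2 : Fb (x (l + 1)) < Fb (x l) := hFbm (hmem l) (hmem (l + 1)) hlt
    have := (hstep l).2; linarith
  have step1' : ∀ l, 0 < Fa (x l) + Fb (x l) → x (l + 1) < x l := by
    intro l hl
    have h1 : Fa (x (l + 1)) < Fa (x l) := by have := (hstep l).2; linarith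
    exact (hFam.lt_iff_lt (hmem (l + 1)) (hmem l)).mp h1
  have step2' : ∀ l, 0 < Fa (x l) + Fb (x l) → 0 < Fa (x (l + 1)) + Fb (x (l + 1)) := by
    intro l hl
    have hlt := step1' l hl
    have h2 : Fb (x l) < Fb (x (l + 1)) := hFbm (hmem (l + 1)) (hmem l) hlt
    have := (hstep l).2; linarith
  rcases lt_trichotomy (Fa (x 0) + Fb (x 0)) 0 with h | h | h
  · -- increasing case
    have hneg : ∀ l, Fa (x l) + Fb (x l) < 0 := by
      intro l; induction l with
      | zero => exact h
      | succ n ih => exact step2 n ih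
    have hmono : StrictMono x := strictMono_nat_of_lt_succ (fun l => step1 l (hneg l))
    have hub : ∀ l, x l ≤ xp := by
      intro l
      by_contra hc
      push_neg at hc
      exact absurd (hp (x l) hc) (not_lt.mpr (hneg l).le)
    have hbdd : BddAbove (Set.range x) := ⟨xp, by rintro _ ⟨l, rfl⟩; exact hub l⟩
    have ht : Tendsto x atTop (nhds (⨆ l, x l)) :=
      tendsto_atTop_ciSup hmono.monotone hbdd
    have hxs : 0 < ⨆ l, x l := lt_of_lt_of_le hx0 (le_ciSup hbdd 0)
    exact ⟨_, hxs, ht, limit_zero_aux Fa Fb hFa hFb x hpos (fun l => (hstep l).2) _ hxs ht⟩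
  · -- constant case
    have hconst : ∀ l, x l = x 0 := by
      intro l; induction l with
      | zero => rfl
      | succ n ih =>
        have := huniq n (x 0) hx0 (by rw [ih]; exact h)
        exact this.symm
    refine ⟨x 0, hx0, ?_, by simpa [hconst 1] using (hstep 0).2⟩
    have : x = fun _ => x 0 := funext hconst
    rw [this]; exact tendsto_const_nhds
  · -- decreasing case
    have hposF : ∀ l, 0 < Fa (x l) + Fb (x l) := by
      intro l; induction l with
      | zero => exact h
      | succ n ih => exact step2' n ih
    have hmono : StrictAnti x := strictAnti_nat_of_succ_lt (fun l => step1' l (hposF l))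
    have hlb : ∀ l, xm ≤ x l := by
      intro l
      by_contra hc
      push_neg at hc
      exact absurd (hm (x l) (hpos l) hc) (not_lt.mpr (hposF l).le)
    have hbdd : BddBelow (Set.range x) := ⟨xm, by rintro _ ⟨l, rfl⟩; exact hlb l⟩
    have ht : Tendsto x atTop (nhds (⨅ l, x l)) :=
      tendsto_atTop_ciInf hmono.antitone hbdd
    have hxs : 0 < ⨅ l, x l := lt_of_lt_of_le hxm (le_ciInf hlb)
    exact ⟨_, hxs, ht, limit_zero_aux Fa Fb hFa hFb x hpos (fun l => (hstep l).2) _ hxs ht⟩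
end

section
/- The sequence (G(x_l))_l is monotone decreasing, and G(x_{l+1}) = G(x_l) holds if and only if x_0 is a critical point of G (i.e. F(x_0) = 0). Moreover, if (x_l)_l converges to a limit x*, then G(x_0) ≥ G(x_1) ≥ G(x*), with equalities if and only if x_0 is a critical point of G. -/
open Real Filter Topology

/-- Key one-step lemma: if `Fa b + Fb a = 0` with `a ≠ b`, then `G b < G a`. -/
lemma G_step_lt (Fa Fb G : ℝ → ℝ)
    (hFam : StrictMonoOn Fa (Set.Ioi 0)) (hFbm : StrictAntiOn Fb (Set.Ioi 0))
    (hG : ∀ y > (0 : ℝ), HasDerivAt G (Fa y + Fb y) y)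
    {a b : ℝ} (ha : 0 < a) (hb : 0 < b) (hab : Fa b + Fb a = 0) (hne : a ≠ b) :
    G b < G a := by
  rcases lt_or_gt_of_ne hne with h | h
  · -- a < b : deriv G < 0 on (a,b)
    have hanti : StrictAntiOn G (Set.Icc a b) := by
      apply strictAntiOn_of_deriv_neg (convex_Icc a b)
      · intro y hy
        exact ((hG y (lt_of_lt_of_le ha hy.1)).continuousAt).continuousWithinAt
      · intro y hy
        rw [interior_Icc] at hy
        have hy0 : 0 < y := lt_trans ha hy.1
        rw [(hG y hy0).deriv]
        have h1 : Fa y < Fa b := hFam (Set.mem_Ioi.2 hy0) (Set.mem_Ioi.2 hb) hy.2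
        have h2 : Fb y < Fb a := hFbm (Set.mem_Ioi.2 ha) (Set.mem_Ioi.2 hy0) hy.1
        linarith
    exact hanti (Set.left_mem_Icc.2 h.le) (Set.right_mem_Icc.2 h.le) h
  · -- b < a : deriv G > 0 on (b,a)
    have hmono : StrictMonoOn G (Set.Icc b a) := by
      apply strictMonoOn_of_deriv_pos (convex_Icc b a)
      · intro y hy
        exact ((hG y (lt_of_lt_of_le hb hy.1)).continuousAt).continuousWithinAt
      · intro y hy
        rw [interior_Icc] at hy
        have hy0 : 0 < y := lt_trans hb hy.1
        rw [(hG y hy0).deriv]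
        have h1 : Fa b < Fa y := hFam (Set.mem_Ioi.2 hb) (Set.mem_Ioi.2 hy0) hy.1
        have h2 : Fb a < Fb y := hFbm (Set.mem_Ioi.2 hy0) (Set.mem_Ioi.2 ha) hy.2
        linarith
    exact hmono (Set.left_mem_Icc.2 h.le) (Set.right_mem_Icc.2 h.le) h

/-- let `F_a, F_b : (0,∞) → ℝ` be continuous, `F_a` strictly increasing, `F_b`
strictly decreasing, `F := F_a + F_b`, and let `G` be an antiderivative of `F` on `(0,∞)`.
Let `x₀ > 0` and let `(x_l)` be the sequence where `x_{l+1}` is the unique zero in `(0,∞)`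
of `x ↦ F_a(x) + F_b(x_l)`. Then `(G(x_l))_l` is monotone decreasing, with
`G(x_{l+1}) = G(x_l)` iff `x₀` is a critical point of `G` (i.e. `F(x₀) = 0`); and if `(x_l)`
converges to some `x* > 0`, then `G(x₀) ≥ G(x₁) ≥ G(x*)`, with equalities iff `x₀` is a
critical point of `G`. -/
theorem G_decreasing_along_seq (Fa Fb G : ℝ → ℝ)
    (hFa : ContinuousOn Fa (Set.Ioi 0)) (hFb : ContinuousOn Fb (Set.Ioi 0))
    (hFam : StrictMonoOn Fa (Set.Ioi 0)) (hFbm : StrictAntiOn Fb (Set.Ioi 0))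
    (hG : ∀ y > (0 : ℝ), HasDerivAt G (Fa y + Fb y) y)
    (x : ℕ → ℝ) (hx0 : 0 < x 0)
    (hstep : ∀ l, 0 < x (l + 1) ∧ Fa (x (l + 1)) + Fb (x l) = 0)
    (huniq : ∀ l, ∀ y > (0 : ℝ), Fa y + Fb (x l) = 0 → y = x (l + 1)) :
    (∀ l, G (x (l + 1)) ≤ G (x l)) ∧
    (∀ l, G (x (l + 1)) = G (x l) ↔ Fa (x 0) + Fb (x 0) = 0) ∧
    (∀ xstar > (0 : ℝ), Tendsto x atTop (nhds xstar) →
      G (x 1) ≤ G (x 0) ∧ G xstar ≤ G (x 1) ∧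
      ((G (x 0) = G (x 1) ∧ G (x 1) = G xstar) ↔ Fa (x 0) + Fb (x 0) = 0)) := by
  -- positivity of the sequence
  have hxpos : ∀ l, 0 < x l := by
    intro l
    cases l with
    | zero => exact hx0
    | succ n => exact (hstep n).1
  -- fixed point characterization
  have heq : ∀ l, x (l + 1) = x l ↔ Fa (x l) + Fb (x l) = 0 := by
    intro l
    constructor
    · intro h
      have := (hstep l).2
      rwa [h] at this
    · intro h
      exact (huniq l (x l) (hxpos l) h).symm
  -- if F(x 0) = 0, the sequence is constant
  have hconst : Fa (x 0) + Fb (x 0) = 0 → ∀ l, x l = x 0 := by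
    intro h0
    intro l
    induction l with
    | zero => rfl
    | succ n ih =>
      rw [(heq n).2 (by rw [ih]; exact h0)]
      exact ih
  -- if F(x 0) ≠ 0, then F(x l) ≠ 0 for all l
  have hne : Fa (x 0) + Fb (x 0) ≠ 0 → ∀ l, Fa (x l) + Fb (x l) ≠ 0 := by
    intro h0
    intro l
    induction l with
    | zero => exact h0
    | succ n ih =>
      have hs := (hstep n).2
      have hFa : Fa (x (n + 1)) = -Fb (x n) := by linarith
      have hxne : x (n + 1) ≠ x n := fun h => ih ((heq n).1 h)
      rcases lt_or_gt_of_ne hxne with h | h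
      · -- x (n+1) < x n : Fb (x (n+1)) > Fb (x n), F(x(n+1)) > 0
        have : Fb (x n) < Fb (x (n + 1)) :=
          hFbm (Set.mem_Ioi.2 (hstep n).1) (Set.mem_Ioi.2 (hxpos n)) h
        intro hc; rw [hFa] at hc; linarith
      · have : Fb (x (n + 1)) < Fb (x n) :=
          hFbm (Set.mem_Ioi.2 (hxpos n)) (Set.mem_Ioi.2 (hstep n).1) h
        intro hc; rw [hFa] at hc; linarith
  -- monotonicity with strictness
  have hlt : ∀ l, Fa (x 0) + Fb (x 0) ≠ 0 → G (x (l + 1)) < G (x l) := by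
    intro l h0
    have hxne : x l ≠ x (l + 1) := fun h => hne h0 l ((heq l).1 h.symm)
    exact G_step_lt Fa Fb G hFam hFbm hG (hxpos l) (hstep l).1 (hstep l).2 hxne
  have hle : ∀ l, G (x (l + 1)) ≤ G (x l) := by
    intro l
    by_cases h0 : Fa (x 0) + Fb (x 0) = 0
    · rw [hconst h0 (l + 1), hconst h0 l]
    · exact (hlt l h0).le
  have hiff : ∀ l, G (x (l + 1)) = G (x l) ↔ Fa (x 0) + Fb (x 0) = 0 := by
    intro l
    constructor
    · intro h
      by_contra h0
      exact absurd h (ne_of_lt (hlt l h0))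
    · intro h0
      rw [hconst h0 (l + 1), hconst h0 l]
  refine ⟨hle, hiff, ?_⟩
  intro xstar hxs hts
  have hGcont : ContinuousAt G xstar := (hG xstar hxs).continuousAt
  have hGtend : Tendsto (fun n => G (x n)) atTop (nhds (G xstar)) :=
    hGcont.tendsto.comp hts
  have hanti : Antitone (fun n => G (x n)) := antitone_nat_of_succ_le hle
  have hGstar : G xstar ≤ G (x 1) := by
    apply le_of_tendsto hGtend
    filter_upwards [eventually_ge_atTop 1] with n hn
    exact hanti hn
  refine ⟨hle 0, hGstar, ?_⟩
  constructor
  · intro ⟨h1, _⟩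
    exact (hiff 0).1 h1.symm
  · intro h0
    have hx1 : x 1 = x 0 := hconst h0 1
    have hxstar : xstar = x 0 := by
      have : Tendsto x atTop (nhds (x 0)) :=
        tendsto_const_nhds.congr (fun n => (hconst h0 n).symm)
      exact tendsto_nhds_unique hts this
    rw [hx1, hxstar]
    exact ⟨rfl, rfl⟩
end

section
/- Let F = F̃_a + F̃_b be another splitting of F into continuous functions with F̃_a strictly increasing and F̃_b strictly decreasing, where F_a and F̃_a are differentiable with F̃_a'(x) > F_a'(x) for all x > 0. Let y_1 be the unique zero of x ↦ F̃_a(x) + F̃_b(x_0) and x_1 the unique zero of x ↦ F_a(x) + F_b(x_0). Then G(x_0) ≥ G(y_1) ≥ G(x_1), with equalities if and only if x_0 is a critical point of G (i.e. F(x_0) = 0). -/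
open Real Filter Topology

/-- let `F = F_a + F_b = F̃_a + F̃_b` be two splittings of `F` on `(0,∞)` into
continuous functions with `F_a, F̃_a` strictly increasing and `F_b, F̃_b` strictly decreasing,
where `F_a, F̃_a` are differentiable with `F̃_a'(x) > F_a'(x)` for all `x > 0`, and let `G` be
an antiderivative of `F` on `(0,∞)`. Let `x₀ > 0`, let `y₁` be the unique zero in `(0,∞)` of
`x ↦ F̃_a(x) + F̃_b(x₀)` and `x₁` the unique zero in `(0,∞)` of `x ↦ F_a(x) + F_b(x₀)`. Then
`G(x₀) ≥ G(y₁) ≥ G(x₁)`, with equalities iff `x₀` is a critical point of `G`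
(i.e. `F(x₀) = 0`). -/
theorem G_two_splittings (Fa Fb tFa tFb G : ℝ → ℝ)
    (hFa : ContinuousOn Fa (Set.Ioi 0)) (hFb : ContinuousOn Fb (Set.Ioi 0))
    (hFam : StrictMonoOn Fa (Set.Ioi 0)) (hFbm : StrictAntiOn Fb (Set.Ioi 0))
    (htFa : ContinuousOn tFa (Set.Ioi 0)) (htFb : ContinuousOn tFb (Set.Ioi 0))
    (htFam : StrictMonoOn tFa (Set.Ioi 0)) (htFbm : StrictAntiOn tFb (Set.Ioi 0))
    (hsplit : ∀ y > (0 : ℝ), Fa y + Fb y = tFa y + tFb y)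
    (Fa' tFa' : ℝ → ℝ)
    (hFa' : ∀ y > (0 : ℝ), HasDerivAt Fa (Fa' y) y)
    (htFa' : ∀ y > (0 : ℝ), HasDerivAt tFa (tFa' y) y)
    (hlt : ∀ y > (0 : ℝ), Fa' y < tFa' y)
    (hG : ∀ y > (0 : ℝ), HasDerivAt G (Fa y + Fb y) y)
    (x0 x1 y1 : ℝ) (hx0 : 0 < x0)
    (hx1 : 0 < x1) (hx1z : Fa x1 + Fb x0 = 0)
    (hx1u : ∀ z > (0 : ℝ), Fa z + Fb x0 = 0 → z = x1)
    (hy1 : 0 < y1) (hy1z : tFa y1 + tFb x0 = 0)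
    (hy1u : ∀ z > (0 : ℝ), tFa z + tFb x0 = 0 → z = y1) :
    G y1 ≤ G x0 ∧ G x1 ≤ G y1 ∧
    ((G x0 = G y1 ∧ G y1 = G x1) ↔ Fa x0 + Fb x0 = 0) := by
  have hx0m : x0 ∈ Set.Ioi (0:ℝ) := hx0
  have hx1m : x1 ∈ Set.Ioi (0:ℝ) := hx1
  have hy1m : y1 ∈ Set.Ioi (0:ℝ) := hy1
  have hs0 : Fa x0 + Fb x0 = tFa x0 + tFb x0 := hsplit x0 hx0
  -- h := tFa - Fa is strictly monotone on Ioi 0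
  have hmono : StrictMonoOn (fun y => tFa y - Fa y) (Set.Ioi 0) := by
    apply strictMonoOn_of_deriv_pos (convex_Ioi 0) (htFa.sub hFa)
    intro x hx
    rw [interior_Ioi] at hx
    rw [((htFa' x hx).sub (hFa' x hx)).deriv]
    linarith [hlt x hx]
  rcases lt_trichotomy (Fa x0 + Fb x0) 0 with hneg | heq | hpos
  · -- F(x0) < 0 : x0 < y1 < x1
    have hFax1 : Fa x1 = Fa x0 - (Fa x0 + Fb x0) := by linarith
    have htFay1 : tFa y1 = tFa x0 - (Fa x0 + Fb x0) := by linarith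
    have hx0ltx1 : x0 < x1 := by
      have : Fa x0 < Fa x1 := by linarith
      exact (hFam.lt_iff_lt hx0m hx1m).mp this
    have hx0lty1 : x0 < y1 := by
      have : tFa x0 < tFa y1 := by linarith
      exact (htFam.lt_iff_lt hx0m hy1m).mp this
    have hy1ltx1 : y1 < x1 := by
      have hh : tFa x0 - Fa x0 < tFa y1 - Fa y1 := hmono hx0m hy1m hx0lty1
      have : Fa y1 < Fa x1 := by linarith
      exact (hFam.lt_iff_lt hy1m hx1m).mp this
    have hsub : Set.Icc x0 x1 ⊆ Set.Ioi (0:ℝ) := fun x hx => lt_of_lt_of_le hx0 hx.1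
    have hGanti : StrictAntiOn G (Set.Icc x0 x1) := by
      apply strictAntiOn_of_deriv_neg (convex_Icc x0 x1)
        (fun x hx => (hG x (hsub hx)).continuousAt.continuousWithinAt)
      intro x hx
      rw [interior_Icc] at hx
      have hxp : (0:ℝ) < x := lt_trans hx0 hx.1
      rw [(hG x hxp).deriv]
      have h1 : Fa x < Fa x1 := hFam (Set.mem_Ioi.mpr hxp) hx1m hx.2
      have h2 : Fb x < Fb x0 := hFbm hx0m (Set.mem_Ioi.mpr hxp) hx.1
      linarith
    have hm1 : x0 ∈ Set.Icc x0 x1 := ⟨le_refl _, le_of_lt hx0ltx1⟩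
    have hm2 : y1 ∈ Set.Icc x0 x1 := ⟨le_of_lt hx0lty1, le_of_lt hy1ltx1⟩
    have hm3 : x1 ∈ Set.Icc x0 x1 := ⟨le_of_lt hx0ltx1, le_refl _⟩
    have g1 : G y1 < G x0 := hGanti hm1 hm2 hx0lty1
    have g2 : G x1 < G y1 := hGanti hm2 hm3 hy1ltx1
    exact ⟨le_of_lt g1, le_of_lt g2, by constructor <;> intro h <;> [linarith [h.1]; linarith]⟩
  · -- F(x0) = 0 : x1 = y1 = x0
    have e1 : x0 = x1 := hx1u x0 hx0 (by linarith)
    have e2 : x0 = y1 := hy1u x0 hx0 (by linarith)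
    rw [← e1, ← e2]
    exact ⟨le_refl _, le_refl _, by simp [heq]⟩
  · -- F(x0) > 0 : x1 < y1 < x0
    have hFax1 : Fa x1 = Fa x0 - (Fa x0 + Fb x0) := by linarith
    have htFay1 : tFa y1 = tFa x0 - (Fa x0 + Fb x0) := by linarith
    have hx1ltx0 : x1 < x0 := by
      have : Fa x1 < Fa x0 := by linarith
      exact (hFam.lt_iff_lt hx1m hx0m).mp this
    have hy1ltx0 : y1 < x0 := by
      have : tFa y1 < tFa x0 := by linarith
      exact (htFam.lt_iff_lt hy1m hx0m).mp this
    have hx1lty1 : x1 < y1 := by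
      have hh : tFa y1 - Fa y1 < tFa x0 - Fa x0 := hmono hy1m hx0m hy1ltx0
      have : Fa x1 < Fa y1 := by linarith
      exact (hFam.lt_iff_lt hx1m hy1m).mp this
    have hsub : Set.Icc x1 x0 ⊆ Set.Ioi (0:ℝ) := fun x hx => lt_of_lt_of_le hx1 hx.1
    have hGmono : StrictMonoOn G (Set.Icc x1 x0) := by
      apply strictMonoOn_of_deriv_pos (convex_Icc x1 x0)
        (fun x hx => (hG x (hsub hx)).continuousAt.continuousWithinAt)
      intro x hx
      rw [interior_Icc] at hx
      have hxp : (0:ℝ) < x := lt_trans hx1 hx.1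
      rw [(hG x hxp).deriv]
      have h1 : Fa x1 < Fa x := hFam hx1m (Set.mem_Ioi.mpr hxp) hx.1
      have h2 : Fb x0 < Fb x := hFbm (Set.mem_Ioi.mpr hxp) hx0m hx.2
      linarith
    have hm1 : x1 ∈ Set.Icc x1 x0 := ⟨le_refl _, le_of_lt hx1ltx0⟩
    have hm2 : y1 ∈ Set.Icc x1 x0 := ⟨le_of_lt hx1lty1, le_of_lt hy1ltx0⟩
    have hm3 : x0 ∈ Set.Icc x1 x0 := ⟨le_of_lt hx1ltx0, le_refl _⟩
    have g1 : G y1 < G x0 := hGmono hm2 hm3 hy1ltx0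
    have g2 : G x1 < G y1 := hGmono hm1 hm2 hx1lty1
    exact ⟨le_of_lt g1, le_of_lt g2, by constructor <;> intro h <;> [linarith [h.1]; linarith]⟩
end

section
/- The function φ is strictly increasing and satisfies −1/x < φ(x) < −1/(2x) for all x > 0 (in particular φ < 0), with φ(x) → −∞ as x → 0⁺ and φ(x) → 0 as x → ∞. Consequently, for every constant c > 0 the function x ↦ φ(x) + c has a unique zero in (0,∞). -/
open Real Filter Topology

namespace PhiAux

/-- The summand: `f t = log (t+1) - log t - 1/t`. -/
noncomputable def f (t : ℝ) : ℝ := Real.log (t + 1) - Real.log t - t⁻¹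

lemma log_lower {t : ℝ} (ht : 0 < t) : 1 / (t + 1) < Real.log (t + 1) - Real.log t := by
  have h1 : t / (t + 1) < 1 := (div_lt_one (by positivity)).mpr (by linarith)
  have h := Real.log_lt_sub_one_of_pos (x := t / (t + 1)) (by positivity) (ne_of_lt h1)
  rw [Real.log_div ht.ne' (by positivity)] at h
  have h2 : t / (t + 1) - 1 = -(1 / (t + 1)) := by field_simp; ring
  linarith

lemma aux_upper {u : ℝ} (hu : 0 < u) :
    Real.log (1 + u) < u * (u + 2) / (2 * (1 + u)) := by
  set g : ℝ → ℝ := fun v => v * (v + 2) - 2 * (1 + v) * Real.log (1 + v) with hg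
  have hmono : StrictMonoOn g (Set.Ici (0 : ℝ)) := by
    apply strictMonoOn_of_deriv_pos (convex_Ici 0)
    · apply ContinuousOn.sub
      · fun_prop
      · apply ContinuousOn.mul (by fun_prop)
        apply ContinuousOn.log (by fun_prop)
        intro v hv
        simp only [Set.mem_Ici] at hv
        positivity
    · intro v hv
      rw [interior_Ici] at hv
      simp only [Set.mem_Ioi] at hv
      have h1v : (0:ℝ) < 1 + v := by linarith
      have hd : HasDerivAt g (2 * v - 2 * Real.log (1 + v)) v := by
        have h1 : HasDerivAt (fun v : ℝ => v * (v + 2)) (1 * (v + 2) + v * 1) v :=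
          (hasDerivAt_id v).mul ((hasDerivAt_id v).add_const 2)
        have h2 : HasDerivAt (fun v : ℝ => Real.log (1 + v)) (1 / (1 + v)) v := by
          have := (((hasDerivAt_id v).const_add 1)).log h1v.ne'
          simpa using this
        have h3 : HasDerivAt (fun v : ℝ => 2 * (1 + v) * Real.log (1 + v))
            ((2 * 1) * Real.log (1 + v) + 2 * (1 + v) * (1 / (1 + v))) v := by
          exact (((hasDerivAt_id v).const_add 1).const_mul 2).mul h2
        have h4 := h1.sub h3
        refine h4.congr_deriv ?_
        rw [show (2:ℝ) * (1 + v) * (1 / (1 + v)) = 2 by rw [mul_assoc, mul_one_div_cancel h1v.ne', mul_one]]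
        ring
      rw [hd.deriv]
      have hlog : Real.log (1 + v) < v := by
        have := Real.log_lt_sub_one_of_pos h1v (by linarith)
        linarith
      linarith
  have h0 : g 0 < g u := hmono (Set.self_mem_Ici) (Set.mem_Ici.mpr hu.le) hu
  have hg0 : g 0 = 0 := by simp [hg]
  have h0' : 0 < u * (u + 2) - 2 * (1 + u) * Real.log (1 + u) := by
    rw [hg0] at h0; exact h0
  rw [lt_div_iff₀ (by positivity)]
  nlinarith [h0']

lemma log_upper {t : ℝ} (ht : 0 < t) :
    Real.log (t + 1) - Real.log t < 1 / t - 1 / (2 * (t * (t + 1))) := by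
  have h := aux_upper (u := t⁻¹) (by positivity)
  have he : (1 : ℝ) + t⁻¹ = (t + 1) / t := by field_simp
  rw [he, Real.log_div (by positivity) ht.ne'] at h
  have he2 : t⁻¹ * (t⁻¹ + 2) / (2 * ((t + 1) / t)) = 1 / t - 1 / (2 * (t * (t + 1))) := by
    field_simp
    ring
  rw [he2] at h
  exact h

lemma f_lt {t : ℝ} (ht : 0 < t) : f t < -(1/2) * (1 / (t * (t + 1))) := by
  have h := log_upper ht
  have h1 : f t = Real.log (t + 1) - Real.log t - 1 / t := by rw [f, one_div]
  have h2 : -(1/2) * (1 / (t * (t + 1))) = 1 / t - 1 / (2 * (t * (t + 1))) - 1 / t := by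
    have ht1 : (t + 1) ≠ 0 := by positivity
    field_simp
    ring
  linarith

lemma lt_f {t : ℝ} (ht : 0 < t) : -(1 / (t * (t + 1))) < f t := by
  have h := log_lower ht
  have h1 : f t = Real.log (t + 1) - Real.log t - 1 / t := by rw [f, one_div]
  have he : -(1 / (t * (t + 1))) = 1 / (t + 1) - 1 / t := by
    field_simp; ring
  linarith

lemma f_neg {t : ℝ} (ht : 0 < t) : f t < 0 := by
  have := f_lt ht
  have h2 : (0:ℝ) < 1 / (t * (t + 1)) := by positivity
  nlinarith

lemma f_strictMono : StrictMonoOn f (Set.Ioi (0 : ℝ)) := by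
  apply strictMonoOn_of_deriv_pos (convex_Ioi 0)
  · unfold f
    apply ContinuousOn.sub
    apply ContinuousOn.sub
    · apply ContinuousOn.log (by fun_prop)
      intro t ht; simp only [Set.mem_Ioi] at ht; positivity
    · apply ContinuousOn.log (by fun_prop)
      intro t ht; simp only [Set.mem_Ioi] at ht; positivity
    · apply ContinuousOn.inv₀ (by fun_prop)
      intro t ht; simp only [Set.mem_Ioi] at ht; positivity
  · intro t ht
    rw [interior_Ioi] at ht
    simp only [Set.mem_Ioi] at ht
    have h1 : HasDerivAt (fun y : ℝ => Real.log (y + 1)) (1 / (t + 1)) t := by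
      have := ((hasDerivAt_id t).add_const 1).log (by positivity : t + 1 ≠ 0)
      simpa using this
    have h2 : HasDerivAt (fun y : ℝ => Real.log y) (1 / t) t := by
      have := (hasDerivAt_id t).log ht.ne'
      simpa using this
    have h3 : HasDerivAt (fun y : ℝ => y⁻¹) (-(t ^ 2)⁻¹) t := hasDerivAt_inv ht.ne'
    have hd : HasDerivAt f (1 / (t + 1) - 1 / t - -(t ^ 2)⁻¹) t := (h1.sub h2).sub h3
    rw [hd.deriv]
    have he : 1 / (t + 1) - 1 / t - -(t ^ 2)⁻¹ = (t ^ 2 * (t + 1))⁻¹ := by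
      field_simp
      ring
    rw [he]
    positivity

/-! ### Digamma facts from convexity of `log ∘ Γ` -/

lemma gamma_ne {x : ℝ} (hx : 0 < x) : ∀ m : ℕ, x ≠ -(m : ℝ) :=
  fun m => ne_of_gt (lt_of_le_of_lt (neg_nonpos.mpr m.cast_nonneg) hx)

lemma Fdiff {x : ℝ} (hx : 0 < x) :
    DifferentiableAt ℝ (fun y => Real.log (Real.Gamma y)) x :=
  (Real.differentiableAt_Gamma (gamma_ne hx)).log (Real.Gamma_ne_zero (gamma_ne hx))

lemma F_rec {x : ℝ} (hx : 0 < x) :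
    Real.log (Real.Gamma (x + 1)) = Real.log (Real.Gamma x) + Real.log x := by
  rw [Real.Gamma_add_one hx.ne', Real.log_mul hx.ne' (Real.Gamma_pos_of_pos hx).ne']
  ring

lemma digamma_rec {x : ℝ} (hx : 0 < x) : digamma (x + 1) = digamma x + 1 / x := by
  unfold digamma
  rw [← deriv_comp_add_const (fun y => Real.log (Real.Gamma y)) 1 x, one_div,
    ← Real.deriv_log, ← deriv_add (Fdiff hx) (Real.differentiableAt_log hx.ne')]
  apply Filter.EventuallyEq.deriv_eq
  filter_upwards [eventually_gt_nhds hx] with y hy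
  exact F_rec hy

lemma hc : ConvexOn ℝ (Set.Ioi (0:ℝ)) (fun y => Real.log (Real.Gamma y)) :=
  Real.convexOn_log_Gamma

lemma digamma_le_log {x : ℝ} (hx : 0 < x) : digamma x ≤ Real.log x := by
  have h := hc.deriv_le_slope (Set.mem_Ioi.mpr hx) (Set.mem_Ioi.mpr (by linarith : (0:ℝ) < x + 1))
    (by linarith) (Fdiff hx)
  rw [slope_def_field, F_rec hx] at h
  simpa [digamma] using h

lemma log_le_digamma {x : ℝ} (hx : 0 < x) : Real.log x ≤ digamma x + 1 / x := by
  have h := hc.slope_le_deriv (Set.mem_Ioi.mpr hx) (Set.mem_Ioi.mpr (by linarith : (0:ℝ) < x + 1))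
    (by linarith) (Fdiff (by linarith : (0:ℝ) < x + 1))
  rw [slope_def_field, F_rec hx] at h
  rw [← digamma_rec hx]
  simpa [digamma] using h

lemma phi_nonpos {x : ℝ} (hx : 0 < x) : phiFn x ≤ 0 := by
  have := digamma_le_log hx
  unfold phiFn; linarith

lemma neg_inv_le_phi {x : ℝ} (hx : 0 < x) : -(1 / x) ≤ phiFn x := by
  have := log_le_digamma hx
  unfold phiFn; linarith

lemma digamma_add_nat {x : ℝ} (hx : 0 < x) (n : ℕ) :
    digamma (x + n) = digamma x + ∑ k ∈ Finset.range n, (x + k)⁻¹ := by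
  induction n with
  | zero => simp
  | succ n ih =>
    have hxn : 0 < x + n := by positivity
    have : x + (n + 1 : ℕ) = (x + n) + 1 := by push_cast; ring
    rw [this, digamma_rec hxn, ih, Finset.sum_range_succ, one_div]
    ring

lemma tendsto_aux (x : ℝ) : Tendsto (fun n : ℕ => 1 / (x + n)) atTop (𝓝 0) := by
  have h : Tendsto (fun n : ℕ => x + (n : ℝ)) atTop atTop :=
    tendsto_atTop_add_const_left _ x tendsto_natCast_atTop_atTop
  simpa [one_div, Pi.inv_def] using h.inv_tendsto_atTop

lemma hasSum_f {x : ℝ} (hx : 0 < x) : HasSum (fun k : ℕ => f (x + k)) (phiFn x) := by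
  have hpos : ∀ k : ℕ, (0:ℝ) < x + k := fun k => by positivity
  have hpart : ∀ n : ℕ, ∑ k ∈ Finset.range n, f (x + k)
      = Real.log (x + n) - Real.log x - ∑ k ∈ Finset.range n, (x + k)⁻¹ := by
    intro n
    induction n with
    | zero => simp
    | succ n ih =>
      rw [Finset.sum_range_succ, Finset.sum_range_succ, ih]
      unfold f
      have : x + (n + 1 : ℕ) = (x + n) + 1 := by push_cast; ring
      rw [this]
      ring
  have key : ∀ n : ℕ, ∑ k ∈ Finset.range n, f (x + k) = phiFn x - phiFn (x + n) := by
    intro n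
    rw [hpart n]
    unfold phiFn
    rw [digamma_add_nat hx n]
    ring
  have h1 : Tendsto (fun n : ℕ => phiFn (x + n)) atTop (𝓝 0) := by
    have hneg : Tendsto (fun n : ℕ => -(1 / (x + (n:ℝ)))) atTop (𝓝 0) := by
      simpa using (tendsto_aux x).neg
    apply tendsto_of_tendsto_of_tendsto_of_le_of_le' hneg tendsto_const_nhds
    · exact Eventually.of_forall fun n => neg_inv_le_phi (hpos n)
    · exact Eventually.of_forall fun n => phi_nonpos (hpos n)
  have h2 : Tendsto (fun n : ℕ => ∑ k ∈ Finset.range n, f (x + k)) atTop (𝓝 (phiFn x)) := by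
    simp only [key]
    simpa using tendsto_const_nhds.sub h1
  have h3 : HasSum (fun k : ℕ => -f (x + k)) (-phiFn x) := by
    rw [hasSum_iff_tendsto_nat_of_nonneg (fun k => neg_nonneg.mpr (f_neg (hpos k)).le)]
    simpa [Finset.sum_neg_distrib] using h2.neg
  simpa using h3.neg

lemma hasSum_inv {x : ℝ} (hx : 0 < x) :
    HasSum (fun k : ℕ => 1 / ((x + k) * (x + k + 1))) (1 / x) := by
  have hpos : ∀ k : ℕ, (0:ℝ) < x + k := fun k => by positivity
  have hpart : ∀ n : ℕ, ∑ k ∈ Finset.range n, 1 / ((x + k) * (x + k + 1))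
      = 1 / x - 1 / (x + n) := by
    intro n
    induction n with
    | zero => simp
    | succ n ih =>
      rw [Finset.sum_range_succ, ih]
      have h1 : (0:ℝ) < x + n := hpos n
      have : x + (n + 1 : ℕ) = (x + n) + 1 := by push_cast; ring
      rw [this]
      field_simp
      ring
  rw [hasSum_iff_tendsto_nat_of_nonneg (fun k => by positivity)]
  simp only [hpart]
  simpa using tendsto_const_nhds.sub (tendsto_aux x)

/-! ### Strict bounds -/

lemma phi_lt {x : ℝ} (hx : 0 < x) : phiFn x < -1 / (2 * x) := by
  have hpos : ∀ k : ℕ, (0:ℝ) < x + k := fun k => by positivity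
  have hg : HasSum (fun k : ℕ => (-(1/2) : ℝ) * (1 / ((x + k) * (x + k + 1))))
      ((-(1/2)) * (1 / x)) := (hasSum_inv hx).mul_left _
  have h := hasSum_lt (f := fun k : ℕ => f (x + k))
    (g := fun k : ℕ => (-(1/2) : ℝ) * (1 / ((x + k) * (x + k + 1))))
    (fun k => (f_lt (hpos k)).le)
    (i := 0) (by simp only [Nat.cast_zero, add_zero]; exact f_lt hx) (hasSum_f hx) hg
  calc phiFn x < (-(1/2)) * (1 / x) := h
    _ = -1 / (2 * x) := by ring

lemma lt_phi {x : ℝ} (hx : 0 < x) : -1 / x < phiFn x := by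
  have hpos : ∀ k : ℕ, (0:ℝ) < x + k := fun k => by positivity
  have hg : HasSum (fun k : ℕ => -(1 / ((x + k) * (x + k + 1)))) (-(1 / x)) :=
    (hasSum_inv hx).neg
  have h := hasSum_lt (f := fun k : ℕ => -(1 / ((x + k) * (x + k + 1))))
    (g := fun k : ℕ => f (x + k))
    (fun k => (lt_f (hpos k)).le)
    (i := 0) (by simp only [Nat.cast_zero, add_zero]; exact lt_f hx) hg (hasSum_f hx)
  calc -1 / x = -(1 / x) := by ring
    _ < phiFn x := h

lemma phi_strictMono : StrictMonoOn phiFn (Set.Ioi (0 : ℝ)) := by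
  intro x hx y hy hxy
  simp only [Set.mem_Ioi] at hx hy
  have hposx : ∀ k : ℕ, (0:ℝ) < x + k := fun k => by positivity
  have hposy : ∀ k : ℕ, (0:ℝ) < y + k := fun k => by positivity
  exact hasSum_lt (f := fun k : ℕ => f (x + k)) (g := fun k : ℕ => f (y + k))
    (fun k => (f_strictMono (Set.mem_Ioi.mpr (hposx k)) (Set.mem_Ioi.mpr (hposy k))
      (by linarith)).le)
    (i := 0) (by
      simp only [Nat.cast_zero, add_zero]
      exact f_strictMono (Set.mem_Ioi.mpr hx) (Set.mem_Ioi.mpr hy) hxy)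
    (hasSum_f hx) (hasSum_f hy)

/-! ### Continuity -/

lemma phi_contOn {a : ℝ} (ha : 0 < a) : ContinuousOn phiFn (Set.Ici a) := by
  have hposm : ∀ (y : ℝ) (k : ℕ), (0:ℝ) < max y a + k := fun y k => by
    have : a ≤ max y a := le_max_right y a
    positivity
  have hF : Continuous (fun y : ℝ => ∑' k : ℕ, f (max y a + k)) := by
    apply continuous_tsum (u := fun k : ℕ => 1 / ((a + k) * (a + k + 1)))
    · intro k
      have hm : Continuous (fun y : ℝ => max y a + k) :=
        (continuous_id.max continuous_const).add continuous_const
      unfold f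
      apply Continuous.sub
      apply Continuous.sub
      · exact (hm.add continuous_const).log (fun y => by have := hposm y k; exact ne_of_gt (by simp only [Pi.add_apply]; linarith))
      · exact hm.log (fun y => (hposm y k).ne')
      · exact hm.inv₀ (fun y => (hposm y k).ne')
    · exact (hasSum_inv ha).summable
    · intro k y
      have ht : (0:ℝ) < max y a + k := hposm y k
      have h1 : -f (max y a + k) ≤ 1 / ((max y a + k) * (max y a + k + 1)) := by
        have := lt_f ht
        linarith
      have h2 : 1 / ((max y a + k) * (max y a + k + 1)) ≤ 1 / ((a + k) * (a + k + 1)) := by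
        apply one_div_le_one_div_of_le (by positivity)
        have hma : a + k ≤ max y a + k := by
          have := le_max_right y a; linarith
        apply mul_le_mul hma (by linarith) (by positivity) (by positivity)
      rw [Real.norm_eq_abs, abs_of_neg (f_neg ht)]
      linarith
  apply (hF.continuousOn).congr
  intro y hy
  simp only [Set.mem_Ici] at hy
  have hy0 : 0 < y := lt_of_lt_of_le ha hy
  show phiFn y = ∑' k : ℕ, f (max y a + k)
  rw [max_eq_left hy]
  exact ((hasSum_f hy0).tsum_eq).symm

/-! ### Limits -/

lemma phi_tendsto_atBot : Tendsto phiFn (nhdsWithin 0 (Set.Ioi 0)) atBot := by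
  have h1 : Tendsto (fun x : ℝ => -1 / (2 * x)) (nhdsWithin 0 (Set.Ioi 0)) atBot := by
    have h2 : Tendsto (fun x : ℝ => x⁻¹ * (1/2)) (nhdsWithin 0 (Set.Ioi 0)) atTop :=
      Tendsto.atTop_mul_const (by norm_num) tendsto_inv_nhdsGT_zero
    have h3 : Tendsto (fun x : ℝ => -(x⁻¹ * (1/2))) (nhdsWithin 0 (Set.Ioi 0)) atBot :=
      tendsto_neg_atTop_atBot.comp h2
    apply h3.congr
    intro x
    ring
  apply tendsto_atBot_mono' _ _ h1
  filter_upwards [self_mem_nhdsWithin] with x hx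
  exact (phi_lt hx).le

lemma phi_tendsto_zero : Tendsto phiFn atTop (𝓝 0) := by
  have hlo : Tendsto (fun x : ℝ => -1 / x) atTop (𝓝 0) := by
    have := tendsto_inv_atTop_zero (𝕜 := ℝ)
    simpa [neg_div, one_div] using this.neg
  apply tendsto_of_tendsto_of_tendsto_of_le_of_le' hlo tendsto_const_nhds
  · filter_upwards [eventually_gt_atTop (0:ℝ)] with x hx
    exact (lt_phi hx).le
  · filter_upwards [eventually_gt_atTop (0:ℝ)] with x hx
    exact phi_nonpos hx

end PhiAux

/-- `φ` is strictly increasing on `(0,∞)`, satisfies `-1/x < φ(x) < -1/(2x)`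
(in particular `φ < 0`), tends to `-∞` as `x → 0⁺` and to `0` as `x → ∞`; consequently for
every `c > 0` the function `x ↦ φ(x) + c` has a unique zero in `(0,∞)`. -/
theorem phi_strictMono_bounds_limits_unique_zero :
    StrictMonoOn phiFn (Set.Ioi (0 : ℝ)) ∧
    (∀ x > (0 : ℝ), -1 / x < phiFn x ∧ phiFn x < -1 / (2 * x)) ∧
    (∀ x > (0 : ℝ), phiFn x < 0) ∧
    Tendsto phiFn (nhdsWithin 0 (Set.Ioi 0)) atBot ∧
    Tendsto phiFn atTop (nhds 0) ∧
    (∀ c > (0 : ℝ), ∃! x : ℝ, x > 0 ∧ phiFn x + c = 0) := by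
  refine ⟨PhiAux.phi_strictMono, fun x hx => ⟨PhiAux.lt_phi hx, PhiAux.phi_lt hx⟩,
    fun x hx => ?_, PhiAux.phi_tendsto_atBot, PhiAux.phi_tendsto_zero, fun c hc => ?_⟩
  · have h := PhiAux.phi_lt hx
    have : -1 / (2 * x) < 0 := by
      apply div_neg_of_neg_of_pos (by norm_num) (by positivity)
    linarith
  · -- existence
    obtain ⟨x₁, hx₁mem, hx₁⟩ : ∃ x₁ : ℝ, x₁ ∈ Set.Ioi (0:ℝ) ∧ phiFn x₁ < -c := by
      have h := PhiAux.phi_tendsto_atBot.eventually (eventually_lt_atBot (-c))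
      exact (h.and self_mem_nhdsWithin).exists.imp (fun x hx => ⟨hx.2, hx.1⟩)
    simp only [Set.mem_Ioi] at hx₁mem
    obtain ⟨x₂, hx₂gt, hx₂⟩ : ∃ x₂ : ℝ, x₁ < x₂ ∧ -c < phiFn x₂ := by
      have h := PhiAux.phi_tendsto_zero.eventually (eventually_gt_nhds (by linarith : -c < 0))
      exact ((eventually_gt_atTop x₁).and h).exists.imp (fun x hx => ⟨hx.1, hx.2⟩)
    have hx₂pos : 0 < x₂ := lt_trans hx₁mem hx₂gt
    have hcont : ContinuousOn (fun x => phiFn x + c) (Set.Icc x₁ x₂) :=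
      ((PhiAux.phi_contOn hx₁mem).mono (Set.Icc_subset_Ici_self)).add continuousOn_const
    have hmem : (0:ℝ) ∈ Set.Icc (phiFn x₁ + c) (phiFn x₂ + c) :=
      ⟨by linarith, by linarith⟩
    obtain ⟨x₀, hx₀mem, hx₀⟩ := intermediate_value_Icc hx₂gt.le hcont hmem
    have hx₀' : phiFn x₀ + c = 0 := hx₀
    have hx₀pos : 0 < x₀ := lt_of_lt_of_le hx₁mem hx₀mem.1
    refine ⟨x₀, ⟨hx₀pos, hx₀'⟩, ?_⟩
    rintro y ⟨hy, hyz⟩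
    by_contra hne
    rcases lt_or_gt_of_ne hne with h | h
    · have := PhiAux.phi_strictMono (Set.mem_Ioi.mpr hy) (Set.mem_Ioi.mpr hx₀pos) h
      linarith
    · have := PhiAux.phi_strictMono (Set.mem_Ioi.mpr hx₀pos) (Set.mem_Ioi.mpr hy) h
      linarith
end
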